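/- arXiv:2004.02847 — 7 statements merged into one kernel-verified Lean document; each statement's English description precedes it below -/
import Mathlib

section
/- Let K be a field of characteristic ≠ 2, let f ∈ K[X] be a monic quadratic polynomial with adjusted post-critical orbit {c_n}, and let α ∈ K be an element not belonging to the post-critical orbit of f. If the Galois group Gal(K_∞(f,α)/K), equipped with the Krull topology, is topologically finitely generated, then the subgroup of Kˣ/(Kˣ)² generated by the classes of the elements c_{n,α}, n ≥ 1, is finite. -/
open Polynomial

-- generic pairing lemma
lemma pairing_aux {M : Type*} [CommMonoid M] (u : M) {β : Type*} [DecidableEq β] (ψ : β → M) :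
    ∀ (m : ℕ) (s : Finset β), s.card = m → ∀ (σ : β → β),
    (∀ x ∈ s, σ x ∈ s) → (∀ x ∈ s, σ (σ x) = x) → (∀ x ∈ s, σ x ≠ x) →
    ∀ (φ : β → M), (∀ x ∈ s, φ x * φ (σ x) = u * (ψ x * ψ x)) →
    ∃ t : M, s.prod φ = u ^ (s.card / 2) * (t * t) := by
  intro m
  induction m using Nat.strong_induction_on with
  | _ m ih =>
    intro s hcard σ hmem hinv hne φ hpair
    rcases s.eq_empty_or_nonempty with rfl | ⟨x, hx⟩
    · exact ⟨1, by simp⟩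
    · have hσx : σ x ∈ s := hmem x hx
      have hxne : σ x ≠ x := hne x hx
      have hσxe : σ x ∈ s.erase x := Finset.mem_erase.mpr ⟨hxne, hσx⟩
      set s' := (s.erase x).erase (σ x) with hs'
      have hx_not : x ∉ s' := by simp [hs', Finset.mem_erase]
      have hσx_not : σ x ∉ s' := by simp [hs', Finset.mem_erase]
      have hsub : ∀ y ∈ s', y ∈ s := by
        intro y hy
        exact Finset.mem_of_mem_erase (Finset.mem_of_mem_erase hy)
      have hmem' : ∀ y ∈ s', σ y ∈ s' := by
        intro y hy
        have hys := hsub y hy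
        have hy1 : y ≠ σ x := (Finset.mem_erase.mp hy).1
        have hy2 : y ≠ x := (Finset.mem_erase.mp (Finset.mem_of_mem_erase hy)).1
        refine Finset.mem_erase.mpr ⟨?_, Finset.mem_erase.mpr ⟨?_, hmem y hys⟩⟩
        · intro h; exact hy2 (by rw [← hinv x hx, ← h, hinv y hys])
        · intro h; exact hy1 (by rw [← hinv y hys, h])
      have hcard2 : 2 ≤ s.card := by
        have := Finset.one_lt_card.mpr ⟨σ x, hσx, x, hx, hxne⟩
        omega
      have hcards' : s'.card = s.card - 2 := by
        rw [hs', Finset.card_erase_of_mem hσxe, Finset.card_erase_of_mem hx]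
        omega
      have hlt : s'.card < m := by omega
      obtain ⟨t, ht⟩ := ih s'.card (by omega) s' rfl σ hmem'
        (fun y hy => hinv y (hsub y hy)) (fun y hy => hne y (hsub y hy)) φ
        (fun y hy => hpair y (hsub y hy))
      refine ⟨ψ x * t, ?_⟩
      have hsplit : s = insert x (insert (σ x) s') := by
        rw [hs', Finset.insert_erase hσxe, Finset.insert_erase hx]
      have hxnotin : x ∉ insert (σ x) s' := by simp [Finset.mem_insert, hxne.symm, hx_not]
      have hic : (insert x (insert (σ x) s')).card = s'.card + 2 := by
        rw [Finset.card_insert_of_notMem hxnotin, Finset.card_insert_of_notMem hσx_not]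
      rw [hsplit, Finset.prod_insert hxnotin,
        Finset.prod_insert hσx_not, ← mul_assoc, hpair x hx, ht, hic]
      have h2 : (s'.card + 2) / 2 = s'.card / 2 + 1 := by omega
      rw [h2, pow_succ, mul_mul_mul_comm (ψ x) t (ψ x) t,
        mul_mul_mul_comm u (ψ x * ψ x) (u ^ (s'.card / 2)) (t * t),
        mul_comm u (u ^ (s'.card / 2))]

section iter
variable {R : Type*} [CommRing R] (f : R[X])

lemma iterg_succ (n : ℕ) :
    (fun p : R[X] => p.comp f)^[n + 1] X = ((fun p : R[X] => p.comp f)^[n] X).comp f :=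
  Function.iterate_succ_apply' _ n X

lemma evalg (n : ℕ) (x : R) :
    ((fun p : R[X] => p.comp f)^[n] X).eval x = (fun y => f.eval y)^[n] x := by
  induction n generalizing x with
  | zero => simp
  | succ n ih =>
    rw [iterg_succ, eval_comp, ih, Function.iterate_succ_apply]

lemma mapg {S : Type*} [CommRing S] (φ : R →+* S) (n : ℕ) :
    ((fun p : R[X] => p.comp f)^[n] X).map φ = (fun p : S[X] => p.comp (f.map φ))^[n] X := by
  induction n with
  | zero => simp
  | succ n ih => rw [iterg_succ, iterg_succ, map_comp, ih]

lemma monicg [IsDomain R] (hf : f.Monic) (hd : f.natDegree = 2) (n : ℕ) :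
    ((fun p : R[X] => p.comp f)^[n] X).Monic ∧
      ((fun p : R[X] => p.comp f)^[n] X).natDegree = 2 ^ n := by
  induction n with
  | zero => exact ⟨monic_X, by simp⟩
  | succ n ih =>
    rw [iterg_succ]
    refine ⟨ih.1.comp hf (by omega), ?_⟩
    rw [natDegree_comp, ih.2, hd, pow_succ]
end iter

section quad
variable {R : Type*} [CommRing R] (a b : R)

lemma fcomp : ((X - C a) ^ 2 - C b).comp (C (2 * a) - X) = (X - C a) ^ 2 - C b := by
  have h2 : C (2 * a) = C a + C a := by rw [two_mul, C_add]
  simp only [sub_comp, pow_comp, X_comp, C_comp, h2]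
  ring

lemma gcomp (n : ℕ) :
    ((fun p : R[X] => p.comp ((X - C a) ^ 2 - C b))^[n + 1] X).comp (C (2 * a) - X)
      = (fun p : R[X] => p.comp ((X - C a) ^ 2 - C b))^[n + 1] X := by
  rw [iterg_succ, comp_assoc, fcomp]

lemma derivg (hR : (2 : R) ≠ 0) [IsDomain R] (n : ℕ) (r : R)
    (h : (derivative ((fun p : R[X] => p.comp ((X - C a) ^ 2 - C b))^[n] X)).eval r = 0) :
    ∃ k < n, (fun y => ((X - C a) ^ 2 - C b : R[X]).eval y)^[k] r = a := by
  induction n generalizing r with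
  | zero => simp at h
  | succ n ih =>
    rw [iterg_succ, derivative_comp, eval_mul, eval_comp] at h
    rcases mul_eq_zero.mp h with h2 | h1
    · rw [derivative_sub, derivative_C, sub_zero, derivative_pow, derivative_sub,
        derivative_X, derivative_C, sub_zero, mul_one] at h2
      simp only [eval_mul, eval_C, eval_pow, eval_sub, eval_X, Nat.cast_ofNat] at h2
      rcases mul_eq_zero.mp h2 with h3 | h4
      · exact absurd h3 hR
      · have : r - a = 0 := by
          have := pow_eq_zero_iff (n := 2 - 1) (by norm_num) |>.mp h4
          exact this
        exact ⟨0, by omega, by simpa using sub_eq_zero.mp this⟩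
    · obtain ⟨k, hk, hky⟩ := ih _ h1
      exact ⟨k + 1, by omega, by rw [Function.iterate_succ_apply]; exact hky⟩
end quad

section sep
variable {K : Type*} [Field K] (hchar : (2 : K) ≠ 0) (a b α : K)

local notation "C𝕂" => AlgebraicClosure K

lemma evmap {R S : Type*} [CommRing R] [CommRing S] (φ : R →+* S) (f : R[X]) (m : ℕ) (x : R) :
    (fun y => (f.map φ).eval y)^[m] (φ x) = φ ((fun y => f.eval y)^[m] x) := by
  have hsc : Function.Semiconj φ (fun y => f.eval y) (fun y => (f.map φ).eval y) := by
    intro y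
    simp only [eval_map]
    exact (eval₂_at_apply φ y).symm
  exact (hsc.iterate_right m x).symm

include hchar in
lemma sep_g (hα : ∀ n : ℕ, 1 ≤ n → (fun x => ((X - C a) ^ 2 - C b : K[X]).eval x)^[n] a ≠ α)
    (n : ℕ) (hn : 1 ≤ n) :
    ((fun p : K[X] => p.comp ((X - C a) ^ 2 - C b))^[n] X - C α).Separable := by
  classical
  set f : K[X] := (X - C a) ^ 2 - C b with hfdef
  have hfm : f.Monic := by
    apply Polynomial.Monic.sub_of_left ((monic_X_sub_C a).pow 2)
    rw [degree_pow, degree_X_sub_C]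
    exact lt_of_le_of_lt (degree_C_le) (by norm_num)
  have hfd : f.natDegree = 2 := by
    rw [hfdef]
    compute_degree!
  set g : K[X] := (fun p : K[X] => p.comp f)^[n] X with hgdef
  have hgm := monicg f hfm hfd n
  set p : K[X] := g - C α with hpdef
  have hpm : p.Monic := by
    apply hgm.1.sub_of_left
    refine lt_of_le_of_lt (degree_C_le) ?_
    exact natDegree_pos_iff_degree_pos.mp (by rw [hgm.2]; positivity)
  have hp0 : p ≠ 0 := hpm.ne_zero
  have hsplits : (p.map (algebraMap K C𝕂)).Splits := IsAlgClosed.splits _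
  rw [← nodup_aroots_iff_of_splits hp0 hsplits]
  rw [aroots_def]
  set φ : K →+* C𝕂 := algebraMap K C𝕂 with hφdef
  have hinj : Function.Injective φ := φ.injective
  rw [Multiset.nodup_iff_count_le_one]
  intro r
  rw [count_roots]
  by_contra hgt
  push_neg at hgt
  have h1 := (one_lt_rootMultiplicity_iff_isRoot (by
      simpa using (hpm.map φ).ne_zero)).mp hgt
  -- identify p.map φ
  have hmap : p.map φ = (fun q : (C𝕂)[X] => q.comp ((X - C (φ a)) ^ 2 - C (φ b)))^[n] X
      - C (φ α) := by
    rw [hpdef, Polynomial.map_sub, map_C, hgdef, mapg, hfdef]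
    simp [Polynomial.map_sub, Polynomial.map_pow]
  obtain ⟨hr1, hr2⟩ := h1
  rw [hmap] at hr1 hr2
  have h2C : (2 : C𝕂) ≠ 0 := by
    intro h
    apply hchar
    have h2 : φ (2 : K) = 2 := map_ofNat φ 2
    exact hinj (by rw [h2, h, map_zero])
  -- from hr2 : derivative root
  have hr2' : (derivative ((fun q : (C𝕂)[X] => q.comp ((X - C (φ a)) ^ 2 - C (φ b)))^[n] X)).eval r
      = 0 := by
    have := hr2
    rw [IsRoot, derivative_sub, derivative_C, sub_zero] at this
    exact this
  obtain ⟨k, hk, hky⟩ := derivg (φ a) (φ b) h2C n r hr2'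
  -- from hr1 : value root
  have hr1' : (fun y => (((X - C (φ a)) ^ 2 - C (φ b)) : (C𝕂)[X]).eval y)^[n] r = φ α := by
    have := hr1
    rw [IsRoot, eval_sub, eval_C, sub_eq_zero, evalg] at this
    exact this
  set FC : C𝕂 → C𝕂 := fun y => (((X - C (φ a)) ^ 2 - C (φ b)) : (C𝕂)[X]).eval y with hFC
  have hcomb : FC^[n - k] (φ a) = φ α := by
    rw [← hky, ← Function.iterate_add_apply, Nat.sub_add_cancel (le_of_lt hk)]
    exact hr1'
  have hmapf : ((X - C a) ^ 2 - C b : K[X]).map φ = (X - C (φ a)) ^ 2 - C (φ b) := by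
    simp [Polynomial.map_sub, Polynomial.map_pow]
  have := evmap φ ((X - C a) ^ 2 - C b) (n - k) a
  rw [hmapf] at this
  rw [this] at hcomb
  exact hα (n - k) (by omega) (hinj hcomb)
end sep

section sqrt
variable {K : Type*} [Field K]

noncomputable abbrev Linf (K : Type*) [Field K] (f : K[X]) (α : K) :
    IntermediateField K (AlgebraicClosure K) :=
  IntermediateField.adjoin K
    {x : AlgebraicClosure K | ∃ n : ℕ, 1 ≤ n ∧
      Polynomial.aeval x ((fun p => p.comp f)^[n] X) = algebraMap K (AlgebraicClosure K) α}

lemma sqrt_c (hchar : (2 : K) ≠ 0) (a b α : K)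
    (hα : ∀ n : ℕ, 1 ≤ n → (fun x => ((X - C a) ^ 2 - C b : K[X]).eval x)^[n] a ≠ α)
    (n : ℕ) (hn : 1 ≤ n) :
    ∃ t : Linf K ((X - C a) ^ 2 - C b) α, t * t = algebraMap K (Linf K ((X - C a) ^ 2 - C b) α)
      (if n = 1 then -((fun x => ((X - C a) ^ 2 - C b : K[X]).eval x)^[1] a) + α
        else (fun x => ((X - C a) ^ 2 - C b : K[X]).eval x)^[n] a - α) := by
  classical
  obtain ⟨m, rfl⟩ : ∃ m, n = m + 1 := ⟨n - 1, by omega⟩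
  set f : K[X] := (X - C a) ^ 2 - C b with hfdef
  set L := Linf K f α with hLdef
  set φL : K →+* ↥L := algebraMap K ↥L with hφLdef
  set φC : K →+* AlgebraicClosure K := algebraMap K (AlgebraicClosure K) with hφCdef
  have hφLinj : Function.Injective φL := φL.injective
  set g : K[X] := (fun p : K[X] => p.comp f)^[m + 1] X with hgdef
  set p : K[X] := g - C α with hpdef
  have hfm : f.Monic := by
    apply Polynomial.Monic.sub_of_left ((monic_X_sub_C a).pow 2)
    rw [degree_pow, degree_X_sub_C]
    exact lt_of_le_of_lt (degree_C_le) (by norm_num)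
  have hfd : f.natDegree = 2 := by rw [hfdef]; compute_degree!
  have hgm := monicg f hfm hfd (m + 1)
  have hpm : p.Monic := by
    apply hgm.1.sub_of_left
    refine lt_of_le_of_lt (degree_C_le) ?_
    exact natDegree_pos_iff_degree_pos.mp (by rw [hgm.2]; positivity)
  have hp0 : p ≠ 0 := hpm.ne_zero
  have hpd : p.natDegree = 2 ^ (m + 1) := by rw [hpdef, natDegree_sub_C, hgm.2]
  have hsep : p.Separable := sep_g hchar a b α hα (m + 1) (by omega)
  -- the polynomial over L
  set pL : Polynomial ↥L := p.map φL with hpLdef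
  have hpLm : pL.Monic := hpm.map φL
  have hpL0 : pL ≠ 0 := hpLm.ne_zero
  have hpLd : pL.natDegree = 2 ^ (m + 1) := by rw [hpLdef, natDegree_map, hpd]
  -- over the algebraic closure
  set pC : Polynomial (AlgebraicClosure K) := p.map φC with hpCdef
  have htower : pL.map (algebraMap ↥L (AlgebraicClosure K)) = pC := by
    rw [hpLdef, Polynomial.map_map, ← IsScalarTower.algebraMap_eq]
  have hsplitsC : (p.map φC).Splits := IsAlgClosed.splits _
  have hpCcard : pC.roots.card = 2 ^ (m + 1) := by
    rw [← hpd, hpCdef]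
    rw [← natDegree_map φC]; exact hsplitsC.natDegree_eq_card_roots.symm
  have hpCnodup : pC.roots.Nodup := nodup_roots (hsep.map)
  -- roots of pC lie in L
  have hrootmem : ∀ r ∈ pC.roots, r ∈ L := by
    intro r hr
    apply IntermediateField.subset_adjoin
    refine ⟨m + 1, by omega, ?_⟩
    have hr0 : pC.eval r = 0 := (mem_roots (by rw [hpCdef]; exact (hpm.map φC).ne_zero)).mp hr
    rw [hpCdef, hpdef, Polynomial.map_sub, map_C, eval_sub, eval_C, sub_eq_zero] at hr0
    rw [← hr0, aeval_def, eval₂_eq_eval_map]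
  -- each root of pC gives a root of pL
  have hLval : ∀ x : ↥L, algebraMap ↥L (AlgebraicClosure K) (pL.eval x)
      = pC.eval (algebraMap ↥L (AlgebraicClosure K) x) := by
    intro x
    conv_rhs => rw [← htower, eval_map, eval₂_at_apply]
  have hinjLC : Function.Injective (algebraMap ↥L (AlgebraicClosure K)) :=
    (algebraMap ↥L (AlgebraicClosure K)).injective
  have hmemrootsL : ∀ r (hr : r ∈ pC.roots), (⟨r, hrootmem r hr⟩ : ↥L) ∈ pL.roots := by
    intro r hr
    rw [mem_roots hpL0]
    apply hinjLC
    rw [hLval, map_zero]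
    exact (mem_roots (by rw [hpCdef]; exact (hpm.map φC).ne_zero)).mp hr
  -- counting
  set F : AlgebraicClosure K → ↥L := fun r => if h : r ∈ L then ⟨r, h⟩ else 0 with hFdef
  have hmaps : ∀ r ∈ pC.roots.toFinset, F r ∈ pL.roots.toFinset := by
    intro r hr
    have hr' := Multiset.mem_toFinset.mp hr
    rw [hFdef]
    simp only [dif_pos (hrootmem r hr')]
    exact Multiset.mem_toFinset.mpr (hmemrootsL r hr')
  have hinjF : Set.InjOn F ↑pC.roots.toFinset := by
    intro r1 h1 r2 h2 he
    have h1' := hrootmem r1 (Multiset.mem_toFinset.mp h1)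
    have h2' := hrootmem r2 (Multiset.mem_toFinset.mp h2)
    rw [hFdef] at he
    simp only [dif_pos h1', dif_pos h2'] at he
    exact congrArg Subtype.val he
  have hcard1 : pC.roots.toFinset.card ≤ pL.roots.toFinset.card :=
    Finset.card_le_card_of_injOn F hmaps hinjF
  have hcard2 : pC.roots.toFinset.card = 2 ^ (m + 1) := by
    rw [Multiset.toFinset_card_of_nodup hpCnodup, hpCcard]
  have hcard3 : pL.roots.card ≤ 2 ^ (m + 1) := by
    rw [← hpLd]
    exact_mod_cast card_roots' pL
  have hcard4 : pL.roots.toFinset.card ≤ pL.roots.card := Multiset.toFinset_card_le _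
  have hnodupL : pL.roots.Nodup := by
    apply Multiset.toFinset_card_eq_card_iff_nodup.mp
    omega
  have hcardL : pL.roots.card = 2 ^ (m + 1) := by omega
  have hsplitsL : pL.Splits := by
    rw [splits_iff_card_roots, hcardL, hpLd]
  -- product formula
  have hprod : pL = (pL.roots.map fun r => X - C r).prod :=
    (prod_multiset_X_sub_C_of_monic_of_roots_card_eq hpLm (hcardL.trans hpLd.symm)).symm
  set aL : ↥L := φL a with haLdef
  have hevalprod : pL.eval aL = (pL.roots.map fun r => aL - r).prod := by
    conv_lhs => rw [hprod]
    rw [eval_multiset_prod, Multiset.map_map]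
    congr 1
    apply Multiset.map_congr rfl
    intro r _
    simp
  have hevalK : pL.eval aL = φL ((fun x => f.eval x)^[m + 1] a - α) := by
    rw [hpLdef, eval_map, eval₂_at_apply, hpdef, eval_sub, eval_C, hgdef, evalg]
  -- the involution
  have h2L : φL (2 : K) = 2 := map_ofNat φL 2
  have h2Lne : (2 : ↥L) ≠ 0 := by
    rw [← h2L]
    simpa using fun h => hchar (hφLinj (by rw [h, map_zero]))
  set σ' : ↥L → ↥L := fun x => φL (2 * a) - x with hσdef
  have hph : φL (2 * a) = aL + aL := by rw [map_mul, h2L, haLdef, two_mul]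
  have hcompL : pL.comp (C (φL (2 * a)) - X) = pL := by
    have hK : p.comp (C (2 * a) - X) = p := by
      rw [hpdef, sub_comp, C_comp, hgdef, hfdef, gcomp]
    have : (C (φL (2 * a)) - X : Polynomial ↥L) = (C (2 * a) - X : K[X]).map φL := by
      simp
    rw [this, hpLdef, ← map_comp, hK]
  have hrootσ : ∀ y ∈ pL.roots, σ' y ∈ pL.roots := by
    intro y hy
    have hy' : pL.IsRoot y := (mem_roots hpL0).mp hy
    rw [mem_roots hpL0]
    have heq : pL.eval (σ' y) = (pL.comp (C (φL (2 * a)) - X)).eval y := by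
      rw [eval_comp, eval_sub, eval_C, eval_X, hσdef]
    rw [IsRoot, heq, hcompL]
    exact hy'
  have haLnotroot : aL ∉ pL.roots := by
    intro hroot
    have h : pL.IsRoot aL := (mem_roots hpL0).mp hroot
    rw [IsRoot, hevalK] at h
    have h0 : (fun x => f.eval x)^[m + 1] a - α = 0 := hφLinj (h.trans (map_zero φL).symm)
    exact hα (m + 1) (by omega) (sub_eq_zero.mp h0)
  -- apply the pairing lemma
  set s : Finset ↥L := pL.roots.toFinset with hsdef
  have hsmem : ∀ x ∈ s, σ' x ∈ s := fun x hx =>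
    Multiset.mem_toFinset.mpr (hrootσ x (Multiset.mem_toFinset.mp hx))
  have hsinv : ∀ x ∈ s, σ' (σ' x) = x := by
    intro x _
    rw [hσdef]
    ring
  have hsne : ∀ x ∈ s, σ' x ≠ x := by
    intro x hx he
    have he' : φL (2 * a) - x = x := he
    have h1 : φL (2 * a) = x + x := by linear_combination he'
    rw [hph] at h1
    have h2 : (2 : ↥L) * aL = (2 : ↥L) * x := by rw [two_mul, two_mul]; linear_combination h1
    have h3 : x = aL := (mul_left_cancel₀ h2Lne h2).symm
    exact haLnotroot (h3 ▸ Multiset.mem_toFinset.mp hx)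
  have hspair : ∀ x ∈ s, (fun y => aL - y) x * (fun y => aL - y) (σ' x)
      = (-1 : ↥L) * ((fun y => aL - y) x * (fun y => aL - y) x) := by
    intro x _
    simp only [hσdef, hph]
    ring
  obtain ⟨t, ht⟩ := pairing_aux (-1 : ↥L) (fun y => aL - y) s.card s rfl σ' hsmem hsinv hsne
    (fun y => aL - y) hspair
  have hscard : s.card = 2 ^ (m + 1) := by
    rw [hsdef, Multiset.toFinset_card_of_nodup hnodupL, hcardL]
  have hsprod : s.prod (fun y => aL - y) = (pL.roots.map fun r => aL - r).prod := by
    rw [Finset.prod]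
    congr 1
    rw [hsdef, Multiset.toFinset_val, Multiset.dedup_eq_self.mpr hnodupL]
  have hkey : φL ((fun x => f.eval x)^[m + 1] a - α) = (-1 : ↥L) ^ (2 ^ m) * (t * t) := by
    rw [← hevalK, hevalprod, ← hsprod, ht, hscard]
    congr 2
    omega
  refine ⟨t, ?_⟩
  rcases Nat.eq_zero_or_pos m with rfl | hm
  · rw [if_pos rfl]
    rw [pow_zero, pow_one] at hkey
    have : φL (-((fun x => f.eval x)^[1] a) + α) = -(φL ((fun x => f.eval x)^[0 + 1] a - α)) := by
      rw [map_add, map_neg, map_sub]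
      ring_nf
    rw [this, hkey]
    ring
  · rw [if_neg (by omega)]
    have heven : Even (2 ^ m) := (Nat.even_pow).mpr ⟨even_two, by omega⟩
    rw [heven.neg_one_pow, one_mul] at hkey
    exact hkey.symm
end sqrt

section galois
open scoped IntermediateField
variable {K : Type*} [Field K]

-- An element of a Galois extension fixed by the whole Galois group lies in the base field.
lemma fixed_mem_base {M : Type*} [Field M] [Algebra K M] [IsGalois K M]
    (x : M) (hx : IsIntegral K x) (hfix : ∀ σ : M ≃ₐ[K] M, σ x = x) :
    ∃ k : K, algebraMap K M k = x := by
  haveI : FiniteDimensional K K⟮x⟯ := IntermediateField.adjoin.finiteDimensional hx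
  set E := IntermediateField.normalClosure K K⟮x⟯ M with hEdef
  haveI : IsGalois K ↥E := ⟨⟩
  have hxE : x ∈ E :=
    IntermediateField.le_normalClosure K⟮x⟯ (IntermediateField.mem_adjoin_simple_self K x)
  set x' : ↥E := ⟨x, hxE⟩ with hx'def
  have hval : algebraMap ↥E M x' = x := rfl
  have hfix' : ∀ τ : ↥E ≃ₐ[K] ↥E, τ x' = x' := by
    intro τ
    apply (algebraMap ↥E M).injective
    have hcomm := AlgEquiv.liftNormal_commutes τ M x'
    rw [hval] at hcomm
    rw [← hcomm, hval, hfix (τ.liftNormal M)]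
  have hmem : x' ∈ IntermediateField.fixedField (⊤ : Subgroup (↥E ≃ₐ[K] ↥E)) := by
    intro g
    exact hfix' g.1
  have hbot : IntermediateField.fixedField (⊤ : Subgroup (↥E ≃ₐ[K] ↥E)) = ⊥ := by
    have h := IsGalois.fixedField_fixingSubgroup (⊥ : IntermediateField K ↥E)
    rw [IntermediateField.fixingSubgroup_bot] at h
    exact h
  rw [hbot, IntermediateField.mem_bot] at hmem
  obtain ⟨k, hk⟩ := hmem
  refine ⟨k, ?_⟩
  rw [← hval, ← hk, ← IsScalarTower.algebraMap_apply]

-- If the Galois group is topologically generated by S and x is fixed by S, then x is fixed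
-- by the whole group.
lemma fix_all_of_gen {M : Type*} [Field M] [Algebra K M]
    (S : Set (M ≃ₐ[K] M)) (hS : (Subgroup.closure S).topologicalClosure = ⊤)
    (x : M) (hx : IsIntegral K x) (hfixS : ∀ σ ∈ S, σ x = x) (σ : M ≃ₐ[K] M) : σ x = x := by
  haveI : FiniteDimensional K K⟮x⟯ := IntermediateField.adjoin.finiteDimensional hx
  set Γ := IntermediateField.fixingSubgroup (K⟮x⟯ : IntermediateField K M) with hΓdef
  have hclosed : IsClosed (Γ : Set (M ≃ₐ[K] M)) :=
    IntermediateField.fixingSubgroup_isClosed _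
  have hsub : S ⊆ Γ := by
    intro τ hτ
    have hτstab : τ ∈ MulAction.stabilizer (M ≃ₐ[K] M) x :=
      MulAction.mem_stabilizer_iff.mpr (hfixS τ hτ)
    have hτx : x ∈ IntermediateField.fixedField (Subgroup.zpowers τ) := by
      intro g
      obtain ⟨g', hg'⟩ := g
      have hg'' : g' ∈ MulAction.stabilizer (M ≃ₐ[K] M) x :=
        (Subgroup.zpowers_le.mpr hτstab) hg'
      exact hg''
    have hle : K⟮x⟯ ≤ IntermediateField.fixedField (Subgroup.zpowers τ) := by
      rw [IntermediateField.adjoin_simple_le_iff]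
      exact hτx
    have := (IntermediateField.le_iff_le (Subgroup.zpowers τ) K⟮x⟯).mp hle
    exact this (Subgroup.mem_zpowers τ)
  have h1 : Subgroup.closure S ≤ Γ := (Subgroup.closure_le Γ).mpr hsub
  have h2 : (Subgroup.closure S).topologicalClosure ≤ Γ :=
    Subgroup.topologicalClosure_minimal _ h1 hclosed
  rw [hS] at h2
  have hσΓ : σ ∈ Γ := h2 (Subgroup.mem_top σ)
  exact hσΓ ⟨x, IntermediateField.mem_adjoin_simple_self K x⟩
end galois

section isgal
variable {K : Type*} [Field K]

lemma linf_isGalois (hchar : (2 : K) ≠ 0) (a b α : K)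
    (hα : ∀ n : ℕ, 1 ≤ n → (fun x => ((X - C a) ^ 2 - C b : K[X]).eval x)^[n] a ≠ α) :
    IsGalois K ↥(Linf K ((X - C a) ^ 2 - C b) α) := by
  set f : K[X] := (X - C a) ^ 2 - C b with hfdef
  have hfm : f.Monic := by
    apply Polynomial.Monic.sub_of_left ((monic_X_sub_C a).pow 2)
    rw [degree_pow, degree_X_sub_C]
    exact lt_of_le_of_lt (degree_C_le) (by norm_num)
  have hfd : f.natDegree = 2 := by rw [hfdef]; compute_degree!
  have hmon : ∀ n : ℕ, ((fun p : K[X] => p.comp f)^[n] X - C α).Monic := by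
    intro n
    have hgm := monicg f hfm hfd n
    apply hgm.1.sub_of_left
    refine lt_of_le_of_lt (degree_C_le) ?_
    exact natDegree_pos_iff_degree_pos.mp (by rw [hgm.2]; positivity)
  haveI hsep : Algebra.IsSeparable K ↥(Linf K f α) := by
    apply (IntermediateField.isSeparable_adjoin_iff_isSeparable K _).mpr
    rintro x ⟨n, hn, heq⟩
    have hdvd : minpoly K x ∣ ((fun p : K[X] => p.comp f)^[n] X - C α) := by
      apply minpoly.dvd
      rw [map_sub, heq, aeval_C]
      exact sub_self _
    exact (sep_g hchar a b α hα n hn).of_dvd hdvd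
  set En : ℕ → IntermediateField K (AlgebraicClosure K) := fun n =>
    IntermediateField.adjoin K
      (((fun p : K[X] => p.comp f)^[n] X - C α).rootSet (AlgebraicClosure K)) with hEndef
  have hLeq : Linf K f α = ⨆ n, En n := by
    apply le_antisymm
    · apply IntermediateField.adjoin_le_iff.mpr
      rintro x ⟨n, hn, heq⟩
      have hxE : x ∈ En n := by
        apply IntermediateField.subset_adjoin
        rw [mem_rootSet]
        exact ⟨(hmon n).ne_zero, by rw [map_sub, heq, aeval_C]; exact sub_self _⟩
      exact (le_iSup En n) hxE
    · apply iSup_le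
      intro n
      apply IntermediateField.adjoin_le_iff.mpr
      intro r hr
      rw [mem_rootSet] at hr
      obtain ⟨hne, hr0⟩ := hr
      match n with
      | 0 =>
        have : r = algebraMap K (AlgebraicClosure K) α := by
          have := hr0
          rw [map_sub, aeval_C] at this
          simpa using sub_eq_zero.mp this
        rw [this]
        exact (Linf K f α).algebraMap_mem α
      | Nat.succ m =>
        apply IntermediateField.subset_adjoin
        refine ⟨m + 1, by omega, ?_⟩
        rw [map_sub, aeval_C, sub_eq_zero] at hr0
        exact hr0
  haveI hnorm : ∀ n, Normal K ↥(En n) := by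
    intro n
    haveI hsf : (((fun p : K[X] => p.comp f)^[n] X - C α)).IsSplittingField K ↥(En n) := by
      rw [hEndef]
      exact IntermediateField.adjoin_rootSet_isSplittingField (IsAlgClosed.splits _)
    exact Normal.of_isSplittingField ((fun p : K[X] => p.comp f)^[n] X - C α)
  have hn2 : Normal K ↥(⨆ n, En n) := IntermediateField.normal_iSup (h := hnorm)
  haveI : Normal K ↥(Linf K f α) := by rw [hLeq]; exact hn2
  exact ⟨⟩
end isgal

/-- Over any field `K` of characteristic `≠ 2`, if the Galois group of
`K_∞(f,α)/K` is topologically finitely generated, then the subgroup of `Kˣ/(Kˣ)²`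
generated by the classes of the `c_{n,α}` is finite. -/
theorem stmt_2 (K : Type*) [Field K] (hchar : (2 : K) ≠ 0) (a b α : K)
    (f : K[X]) (hf : f = (X - C a) ^ 2 - C b)
    (hα : ∀ n : ℕ, 1 ≤ n → (fun x => f.eval x)^[n] a ≠ α)
    (hfg : ∃ S : Set ((IntermediateField.adjoin K
        {x : AlgebraicClosure K | ∃ n : ℕ, 1 ≤ n ∧
          Polynomial.aeval x ((fun p => p.comp f)^[n] X) = algebraMap K (AlgebraicClosure K) α})
        ≃ₐ[K] (IntermediateField.adjoin K
        {x : AlgebraicClosure K | ∃ n : ℕ, 1 ≤ n ∧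
          Polynomial.aeval x ((fun p => p.comp f)^[n] X) = algebraMap K (AlgebraicClosure K) α})),
      S.Finite ∧ (Subgroup.closure S).topologicalClosure = ⊤) :
    Set.Finite
      (↑(Subgroup.closure
          ((QuotientGroup.mk' (powMonoidHom 2 : Kˣ →* Kˣ).range) ''
            {u : Kˣ | ∃ n : ℕ, 1 ≤ n ∧
              (u : K) = if n = 1 then -((fun x => f.eval x)^[1] a) + α
                else (fun x => f.eval x)^[n] a - α}))
        : Set (Kˣ ⧸ (powMonoidHom 2 : Kˣ →* Kˣ).range)) := by
  classical
  subst hf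
  set f : K[X] := (X - C a) ^ 2 - C b with hfdef
  set L : IntermediateField K (AlgebraicClosure K) := IntermediateField.adjoin K
    {x : AlgebraicClosure K | ∃ n : ℕ, 1 ≤ n ∧
      Polynomial.aeval x ((fun p => p.comp f)^[n] X) = algebraMap K (AlgebraicClosure K) α}
    with hLdef
  obtain ⟨S, hSfin, hSdense⟩ := hfg
  haveI : IsGalois K ↥L := linf_isGalois hchar a b α hα
  haveI : Algebra.IsAlgebraic K (AlgebraicClosure K) := AlgebraicClosure.isAlgebraic K
  set N : Subgroup Kˣ := (powMonoidHom 2 : Kˣ →* Kˣ).range with hNdef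
  set φL : K →+* ↥L := algebraMap K ↥L with hφLdef
  have hφLinj : Function.Injective φL := φL.injective
  have h2Lne : (2 : ↥L) ≠ 0 := by
    have h2L : φL (2 : K) = 2 := map_ofNat φL 2
    rw [← h2L]
    simpa using fun h => hchar (hφLinj (by rw [h, map_zero]))
  -- the subgroup of square classes admitting square roots in L
  set Hsq : Subgroup (Kˣ ⧸ N) :=
    { carrier := {q | ∃ u : Kˣ, QuotientGroup.mk' N u = q ∧
        ∃ t : ↥L, t * t = φL ((u : K))},
      one_mem' := ⟨1, by simp, 1, by simp⟩,
      mul_mem' := by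
        rintro q₁ q₂ ⟨u₁, hmk₁, t₁, ht₁⟩ ⟨u₂, hmk₂, t₂, ht₂⟩
        refine ⟨u₁ * u₂, by rw [map_mul, hmk₁, hmk₂], t₁ * t₂, ?_⟩
        rw [mul_mul_mul_comm, ht₁, ht₂, Units.val_mul, map_mul]
      inv_mem' := by
        rintro q ⟨u, hmk, t, ht⟩
        have htne : t ≠ 0 := by
          intro h0
          rw [h0, mul_zero] at ht
          exact Units.ne_zero u (hφLinj (by rw [← ht, map_zero]))
        refine ⟨u⁻¹, by rw [map_inv, hmk], t⁻¹, ?_⟩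
        rw [← mul_inv, ht, ← map_inv₀, Units.val_inv_eq_inv_val] } with hHsqdef
  have hsub : Subgroup.closure
      ((QuotientGroup.mk' N) ''
        {u : Kˣ | ∃ n : ℕ, 1 ≤ n ∧
          (u : K) = if n = 1 then -((fun x => f.eval x)^[1] a) + α
            else (fun x => f.eval x)^[n] a - α}) ≤ Hsq := by
    apply (Subgroup.closure_le Hsq).mpr
    rintro q ⟨u, ⟨n, hn, hu⟩, rfl⟩
    refine ⟨u, rfl, ?_⟩
    obtain ⟨t, ht⟩ := sqrt_c hchar a b α hα n hn
    exact ⟨t, by rw [ht, ← hu]⟩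
  -- Hsq is finite
  have hfinHsq : (Hsq : Set (Kˣ ⧸ N)).Finite := by
    have hex : ∀ q : Kˣ ⧸ N, q ∈ Hsq → ∃ p : Kˣ × ↥L,
        QuotientGroup.mk' N p.1 = q ∧ p.2 * p.2 = φL ((p.1 : K)) := by
      rintro q ⟨u, hmk, t, ht⟩
      exact ⟨(u, t), hmk, ht⟩
    choose P hP1 hP2 using hex
    haveI : Finite ↥S := hSfin.to_subtype
    rw [← Set.finite_coe_iff]
    set Ψ : ↥(Hsq : Set (Kˣ ⧸ N)) → (↥S → Prop) := fun q σ =>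
      σ.1 ((P q.1 q.2).2) = (P q.1 q.2).2 with hΨdef
    apply Finite.of_injective Ψ
    intro q₁ q₂ hΨeq
    set u₁ : Kˣ := (P q₁.1 q₁.2).1 with hu₁
    set t₁ : ↥L := (P q₁.1 q₁.2).2 with ht₁
    set u₂ : Kˣ := (P q₂.1 q₂.2).1 with hu₂
    set t₂ : ↥L := (P q₂.1 q₂.2).2 with ht₂
    have hsq₁ : t₁ * t₁ = φL ((u₁ : K)) := hP2 q₁.1 q₁.2
    have hsq₂ : t₂ * t₂ = φL ((u₂ : K)) := hP2 q₂.1 q₂.2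
    have hmk₁ : QuotientGroup.mk' N u₁ = q₁.1 := hP1 q₁.1 q₁.2
    have hmk₂ : QuotientGroup.mk' N u₂ = q₂.1 := hP1 q₂.1 q₂.2
    have htne : ∀ (t : ↥L) (u : Kˣ), t * t = φL ((u : K)) → t ≠ 0 := by
      intro t u ht h0
      rw [h0, mul_zero] at ht
      exact Units.ne_zero u (hφLinj (by rw [← ht, map_zero]))
    have htne₁ : t₁ ≠ 0 := htne t₁ u₁ hsq₁
    have htne₂ : t₂ ≠ 0 := htne t₂ u₂ hsq₂
    -- all σ ∈ S fix t₁ * t₂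
    have hfixS : ∀ σ ∈ S, σ (t₁ * t₂) = t₁ * t₂ := by
      intro σ hσ
      have hsgn : ∀ (t : ↥L) (u : Kˣ), t * t = φL ((u : K)) → σ t = t ∨ σ t = -t := by
        intro t u ht
        have : σ t * σ t = t * t := by
          rw [← map_mul, ht, AlgEquiv.commutes, ← ht]
        exact mul_self_eq_mul_self_iff.mp this
      have hΨσ : (σ t₁ = t₁) = (σ t₂ = t₂) := congrFun hΨeq ⟨σ, hσ⟩
      rcases hsgn t₁ u₁ hsq₁ with h1 | h1
      · have h2 : σ t₂ = t₂ := (iff_of_eq hΨσ).mp h1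
        rw [map_mul, h1, h2]
      · have hne1 : σ t₁ ≠ t₁ := by
          rw [h1]
          intro hcon
          have : (2 : ↥L) * t₁ = 0 := by rw [two_mul]; linear_combination - hcon
          rcases mul_eq_zero.mp this with h | h
          · exact h2Lne h
          · exact htne₁ h
        have h2 : σ t₂ ≠ t₂ := fun hcon => hne1 ((iff_of_eq hΨσ).mpr hcon)
        have h2' : σ t₂ = -t₂ := (hsgn t₂ u₂ hsq₂).resolve_left h2
        rw [map_mul, h1, h2', neg_mul_neg]
    -- hence the whole Galois group fixes t₁ * t₂, so it lies in K
    have hint : IsIntegral K (t₁ * t₂) :=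
      (Algebra.IsAlgebraic.isAlgebraic (t₁ * t₂)).isIntegral
    have hfixall : ∀ σ : ↥L ≃ₐ[K] ↥L, σ (t₁ * t₂) = t₁ * t₂ :=
      fun σ => fix_all_of_gen S hSdense (t₁ * t₂) hint hfixS σ
    obtain ⟨k, hk⟩ := fixed_mem_base (t₁ * t₂) hint hfixall
    have hkk : k * k = (u₁ : K) * (u₂ : K) := by
      apply hφLinj
      rw [map_mul, hk, map_mul, ← hsq₁, ← hsq₂]
      ring
    have hk0 : k ≠ 0 := by
      intro h0
      rw [h0, zero_mul] at hkk
      exact Units.ne_zero u₁ (by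
        rcases mul_eq_zero.mp hkk.symm with h | h
        · exact h
        · exact absurd h (Units.ne_zero u₂))
    set ku : Kˣ := Units.mk0 k hk0 with hkudef
    have hku2 : ku * ku = u₁ * u₂ := by
      apply Units.ext
      rw [Units.val_mul, Units.val_mul]
      exact hkk
    have hmkeq : QuotientGroup.mk' N u₁ = QuotientGroup.mk' N u₂ := by
      apply (QuotientGroup.mk'_eq_mk' N).mpr
      refine ⟨powMonoidHom 2 (ku * u₁⁻¹), ⟨ku * u₁⁻¹, rfl⟩, ?_⟩
      show u₁ * (ku * u₁⁻¹) ^ 2 = u₂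
      apply Units.ext
      simp only [Units.val_mul, Units.val_pow_eq_pow_val, Units.val_inv_eq_inv_val, hkudef,
        Units.val_mk0]
      field_simp
      linear_combination hkk
    apply Subtype.ext
    rw [← hmk₁, ← hmk₂, hmkeq]
  exact Set.Finite.subset hfinHsq hsub
end

section
/- Let K be a number field, let f = (X − a)² − b ∈ K[X] be a monic quadratic polynomial, and let α be an element of a fixed algebraic closure K̄ of K. If the compositum K_∞(f,α) of the splitting fields over K(α) of all the polynomials f^n(X) − α, n ≥ 1, is a finite extension of K(α), then α belongs to the post-critical orbit of f, i.e., α = f^n(a) for some n ≥ 1. -/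
open Polynomial

lemma aux_int {L : Type*} [Field L] (y c e : L) (hc : IsIntegral ℤ c) (he : IsIntegral ℤ e)
    (h : y ^ 2 = c * y + e) : IsIntegral ℤ y := by
  have hy : IsIntegral (integralClosure ℤ L) y := by
    refine ⟨X ^ 2 - (C ⟨c, hc⟩ * X + C ⟨e, he⟩), ?_, ?_⟩
    · exact monic_X_pow_sub (lt_of_le_of_lt degree_linear_le (by norm_num))
    · simp only [eval₂_sub, eval₂_pow, eval₂_X, eval₂_add, eval₂_mul, eval₂_C]
      have hc' : algebraMap (integralClosure ℤ L) L ⟨c, hc⟩ = c := rfl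
      have he' : algebraMap (integralClosure ℤ L) L ⟨e, he⟩ = e := rfl
      rw [hc', he', h]; ring
  exact isIntegral_trans y hy

lemma exists_den {L : Type*} [Field L] [CharZero L] {z : L} (hz : IsAlgebraic ℚ z) :
    ∃ d : ℤ, d ≠ 0 ∧ IsIntegral ℤ ((d : L) * z) := by
  have hz' : IsAlgebraic ℤ z := (IsFractionRing.isAlgebraic_iff ℤ ℚ L).mpr hz
  obtain ⟨y, hy, hxy⟩ := hz'.exists_integral_multiple
  refine ⟨y, hy, ?_⟩
  rwa [zsmul_eq_mul] at hxy

lemma isIntegral_algebraMap_int {L : Type*} [Field L] (m : ℤ) : IsIntegral ℤ ((m : L)) := by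
  have h := isIntegral_algebraMap (R := ℤ) (A := L) (x := m)
  rwa [eq_intCast] at h

set_option maxHeartbeats 1000000 in
/-- Over a number field `K`, for `f = (X-a)^2 - b` and `α` in a fixed algebraic
closure, if the compositum over `K(α)` of the splitting fields of the `f^n(X) - α` is a
finite extension of `K(α)`, then `α` is in the post-critical orbit of `f`. -/
theorem stmt_6 (K : Type*) [Field K] [NumberField K] (a b : K)
    (f : K[X]) (hf : f = (X - C a) ^ 2 - C b) (α : AlgebraicClosure K)
    (hfin : FiniteDimensional
      (IntermediateField.adjoin K ({α} : Set (AlgebraicClosure K)))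
      (IntermediateField.adjoin
        (↥(IntermediateField.adjoin K ({α} : Set (AlgebraicClosure K))))
        {x : AlgebraicClosure K | ∃ n : ℕ, 1 ≤ n ∧
          Polynomial.aeval x ((fun p => p.comp f)^[n] X) = α})) :
    ∃ n : ℕ, 1 ≤ n ∧ algebraMap K (AlgebraicClosure K) ((fun x => f.eval x)^[n] a) = α := by
  classical
  let E := AlgebraicClosure K
  set a' : E := algebraMap K E a with ha'
  set b' : E := algebraMap K E b with hb'
  set F : E → E := fun z => (z - a') ^ 2 - b' with hFdef
  -- the key identity
  have key : ∀ (n : ℕ) (x : E), aeval x ((fun p => p.comp f)^[n] X) = F^[n] x := by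
    intro n
    induction n with
    | zero => intro x; simp
    | succ n ih =>
      intro x
      rw [Function.iterate_succ_apply', aeval_comp, ih, hf]
      have : (aeval x) ((X - C a) ^ 2 - C b) = F x := by
        simp [hFdef, ha', hb']
      rw [this, ← Function.iterate_succ_apply]
  set S : Set E := {x : E | ∃ n : ℕ, 1 ≤ n ∧
          Polynomial.aeval x ((fun p => p.comp f)^[n] X) = α} with hSdef
  have hSmem : ∀ x : E, x ∈ S ↔ ∃ n : ℕ, 1 ≤ n ∧ F^[n] x = α := by
    intro x
    constructor
    · rintro ⟨n, hn, h⟩; exact ⟨n, hn, by rwa [key] at h⟩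
    · rintro ⟨n, hn, h⟩; exact ⟨n, hn, by rwa [key]⟩
  -- fields
  set Kα := IntermediateField.adjoin K ({α} : Set E) with hKα
  set L := IntermediateField.adjoin (↥Kα) S with hL
  have hαint : IsIntegral K α := (Algebra.IsIntegral.isIntegral α)
  haveI : FiniteDimensional K ↥Kα := IntermediateField.adjoin.finiteDimensional hαint
  haveI : NumberField ↥Kα := NumberField.of_module_finite K ↥Kα
  haveI : FiniteDimensional ↥Kα ↥L := hfin
  haveI : NumberField ↥L := NumberField.of_module_finite ↥Kα ↥L
  -- elements of L
  have hαKα : α ∈ Kα := IntermediateField.mem_adjoin_simple_self K α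
  have haL : a' ∈ L := L.algebraMap_mem ⟨a', Kα.algebraMap_mem a⟩
  have hbL : b' ∈ L := L.algebraMap_mem ⟨b', Kα.algebraMap_mem b⟩
  have hαL : α ∈ L := L.algebraMap_mem ⟨α, hαKα⟩
  set A : ↥L := ⟨a', haL⟩ with hA
  set B0 : ↥L := ⟨b', hbL⟩ with hB0
  set Al : ↥L := ⟨α, hαL⟩ with hAl
  set FL : ↥L → ↥L := fun z => (z - A) ^ 2 - B0 with hFLdef
  have hFLcoe : ∀ z : ↥L, ((FL z : ↥L) : E) = F (z : E) := by
    intro z; simp [hFLdef, hFdef, hA, hB0]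
  have hFLit : ∀ (k : ℕ) (z : ↥L), ((FL^[k] z : ↥L) : E) = F^[k] (z : E) := by
    intro k
    induction k with
    | zero => intro z; simp
    | succ k ih =>
      intro z
      rw [Function.iterate_succ_apply, Function.iterate_succ_apply, ih, hFLcoe]
  -- members of S, as elements of L, reach Al
  have hreach : ∀ y : ↥L, (y : E) ∈ S → ∃ n : ℕ, 1 ≤ n ∧ FL^[n] y = Al := by
    intro y hy
    obtain ⟨n, hn, h⟩ := (hSmem _).mp hy
    exact ⟨n, hn, Subtype.ext (by rw [hFLit]; exact h)⟩
  -- norm bound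
  set nb : (↥L →+* ℂ) → ℝ := fun φ => 2 * ‖φ A‖ + ‖φ B0‖ + ‖φ Al‖ + 2 with hnb
  set Bd : ℝ := ((Finset.univ.sup fun φ : ↥L →+* ℂ => ⌈nb φ⌉₊ : ℕ) : ℝ) with hBd
  have hBdle : ∀ φ : ↥L →+* ℂ, nb φ ≤ Bd := by
    intro φ
    refine (Nat.le_ceil _).trans ?_
    have h := Finset.le_sup (f := fun φ : ↥L →+* ℂ => ⌈nb φ⌉₊) (Finset.mem_univ φ)
    rw [hBd]
    exact_mod_cast h
  have growth : ∀ (φ : ↥L →+* ℂ) (z : ↥L), nb φ ≤ ‖φ z‖ → ‖φ z‖ ≤ ‖φ (FL z)‖ := by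
    intro φ z h
    have h1 : φ (FL z) = (φ z - φ A) ^ 2 - φ B0 := by rw [hFLdef]; push_cast [map_sub, map_pow]; ring
    rw [h1]
    have h2 : ‖φ z‖ - ‖φ A‖ ≤ ‖φ z - φ A‖ := by
      have := norm_sub_norm_le (φ z) (φ A); linarith
    have h3 : ‖(φ z - φ A) ^ 2 - φ B0‖ ≥ ‖(φ z - φ A) ^ 2‖ - ‖φ B0‖ := by
      have := norm_sub_norm_le ((φ z - φ A) ^ 2) (φ B0); linarith
    have h4 : ‖(φ z - φ A) ^ 2‖ = ‖φ z - φ A‖ ^ 2 := by rw [norm_pow]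
    have hA0 : (0:ℝ) ≤ ‖φ A‖ := norm_nonneg _
    have hB00 : (0:ℝ) ≤ ‖φ B0‖ := norm_nonneg _
    have hAl0 : (0:ℝ) ≤ ‖φ Al‖ := norm_nonneg _
    have hnbh : 2 * ‖φ A‖ + ‖φ B0‖ + ‖φ Al‖ + 2 ≤ ‖φ z‖ := by rw [hnb] at h; exact h
    nlinarith [sq_nonneg (‖φ z - φ A‖ - (‖φ z‖ - ‖φ A‖)), sq_nonneg (‖φ z‖ - ‖φ A‖ - 1)]
  have normbound : ∀ (φ : ↥L →+* ℂ) (y : ↥L), (y : E) ∈ S → ‖φ y‖ ≤ Bd := by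
    intro φ y hy
    by_contra hcon
    push_neg at hcon
    have hyb : nb φ ≤ ‖φ y‖ := le_of_lt (lt_of_le_of_lt (hBdle φ) hcon)
    have it : ∀ k : ℕ, ‖φ y‖ ≤ ‖φ (FL^[k] y)‖ := by
      intro k
      induction k with
      | zero => simp
      | succ k ih =>
        rw [Function.iterate_succ_apply']
        exact ih.trans (growth φ _ (hyb.trans ih))
    obtain ⟨n, hn, hAl'⟩ := hreach y hy
    have := it n
    rw [hAl'] at this
    have hnbφ : nb φ = 2 * ‖φ A‖ + ‖φ B0‖ + ‖φ Al‖ + 2 := rfl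
    have hb2 := hBdle φ
    linarith [norm_nonneg (φ A), norm_nonneg (φ B0)]

  -- denominators
  obtain ⟨d₁, hd₁, hi₁⟩ := exists_den (Algebra.IsAlgebraic.isAlgebraic (R := ℚ) A)
  obtain ⟨d₂, hd₂, hi₂⟩ := exists_den (Algebra.IsAlgebraic.isAlgebraic (R := ℚ) Al)
  obtain ⟨d₃, hd₃, hi₃⟩ := exists_den (Algebra.IsAlgebraic.isAlgebraic (R := ℚ) (B0 - A ^ 2))
  have master : ∃ d : ℤ, d ≠ 0 ∧ IsIntegral ℤ ((d : ↥L) * A) ∧ IsIntegral ℤ ((d : ↥L) * Al)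
      ∧ IsIntegral ℤ ((d : ↥L) * (B0 - A ^ 2)) := by
    refine ⟨d₁ * d₂ * d₃, mul_ne_zero (mul_ne_zero hd₁ hd₂) hd₃, ?_, ?_, ?_⟩
    · have he : ((d₁ * d₂ * d₃ : ℤ) : ↥L) * A = ((d₂ * d₃ : ℤ) : ↥L) * (((d₁ : ℤ) : ↥L) * A) := by
        push_cast; ring
      rw [he]
      exact (isIntegral_algebraMap_int _).mul hi₁
    · have he : ((d₁ * d₂ * d₃ : ℤ) : ↥L) * Al = ((d₁ * d₃ : ℤ) : ↥L) * (((d₂ : ℤ) : ↥L) * Al) := by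
        push_cast; ring
      rw [he]
      exact (isIntegral_algebraMap_int _).mul hi₂
    · have he : ((d₁ * d₂ * d₃ : ℤ) : ↥L) * (B0 - A ^ 2)
          = ((d₁ * d₂ : ℤ) : ↥L) * (((d₃ : ℤ) : ↥L) * (B0 - A ^ 2)) := by
        push_cast; ring
      rw [he]
      exact (isIntegral_algebraMap_int _).mul hi₃
  obtain ⟨d, hd0, hdA, hdAl, hdBA⟩ := master
  have hint_int : ∀ m : ℤ, IsIntegral ℤ ((m : ↥L)) := fun m => isIntegral_algebraMap_int m
  have intd : ∀ (n : ℕ) (y : ↥L), FL^[n] y = Al → IsIntegral ℤ ((d : ↥L) * y) := by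
    intro n
    induction n with
    | zero =>
      intro y hy
      rw [Function.iterate_zero_apply] at hy
      rw [hy]; exact hdAl
    | succ n ih =>
      intro y hy
      rw [Function.iterate_succ_apply] at hy
      have h2 := ih (FL y) hy
      apply aux_int ((d : ↥L) * y) (((2 * d : ℤ) : ↥L) * A)
        ((d : ↥L) * ((d : ↥L) * (FL y)) + (d : ↥L) * ((d : ↥L) * (B0 - A ^ 2)))
      · have he : ((2 * d : ℤ) : ↥L) * A = ((2 : ℤ) : ↥L) * (((d : ℤ) : ↥L) * A) := by
          push_cast; ring
        rw [he]; exact (hint_int 2).mul hdA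
      · exact (((hint_int d).mul h2)).add ((hint_int d).mul hdBA)
      · have hFLy : FL y = (y - A) ^ 2 - B0 := by rw [hFLdef]
        rw [hFLy]; push_cast; ring
  -- finiteness of S
  have hBd0 : (0 : ℝ) ≤ Bd := by rw [hBd]; positivity
  have hd0L : ((d : ℤ) : ↥L) ≠ 0 := Int.cast_ne_zero.mpr hd0
  have hinj : Function.Injective (fun y : ↥L => (d : ↥L) * y) :=
    fun x y h => mul_left_cancel₀ hd0L h
  have hndC : ‖((d : ℤ) : ℂ)‖ = |(d : ℝ)| := by
    have : ((d : ℤ) : ℂ) = (((d : ℝ) : ℂ)) := by push_cast; rfl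
    rw [this, Complex.norm_real, Real.norm_eq_abs]
  have hpre' : {y : ↥L | (y : E) ∈ S} ⊆ (fun y : ↥L => (d : ↥L) * y) ⁻¹'
      {x : ↥L | IsIntegral ℤ x ∧ ∀ φ : ↥L →+* ℂ, ‖φ x‖ ≤ |(d : ℝ)| * (Bd + 1)} := by
    intro y hy
    obtain ⟨n, hn, hr⟩ := hreach y hy
    constructor
    · exact intd n y hr
    · intro φ
      have hm : φ ((d : ↥L) * y) = ((d : ℤ) : ℂ) * φ y := by
        rw [map_mul, map_intCast]
      rw [hm, norm_mul, hndC]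
      have h1 : ‖φ y‖ ≤ Bd + 1 := (normbound φ y hy).trans (by linarith)
      exact mul_le_mul_of_nonneg_left h1 (abs_nonneg _)
  have hfin2 : {y : ↥L | (y : E) ∈ S}.Finite :=
    ((NumberField.Embeddings.finite_of_norm_le ↥L ℂ
      (|(d : ℝ)| * (Bd + 1))).preimage hinj.injOn).subset hpre'
  have hSfin : S.Finite := by
    apply (hfin2.image (fun y : ↥L => (y : E))).subset
    intro x hx
    exact ⟨⟨x, IntermediateField.subset_adjoin _ _ hx⟩, hx, rfl⟩
  -- combinatorial part
  have sq : ∀ z : E, ∃ w : E, w ^ 2 = z := fun z => IsAlgClosed.exists_pow_nat_eq z two_pos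
  choose sqrt hsqrt using sq
  set pre : E → E := fun t => a' + sqrt (b' + t) with hpre
  have hFpre : ∀ t, F (pre t) = t := by
    intro t
    simp only [hpre, hFdef]
    linear_combination hsqrt (b' + t)
  have hFpre2 : ∀ t, F (2 * a' - pre t) = t := by
    intro t
    simp only [hpre, hFdef]
    linear_combination hsqrt (b' + t)
  have hpreinj : Function.Injective pre := by
    intro s t h
    rw [← hFpre s, ← hFpre t, h]
  set T : ℕ → Set E := fun n => {x : E | F^[n] x = α} with hT
  have hTS : ∀ n, 1 ≤ n → T n ⊆ S := fun n hn x hx => (hSmem x).mpr ⟨n, hn, hx⟩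
  have hTfin : ∀ n, 1 ≤ n → (T n).Finite := fun n hn => hSfin.subset (hTS n hn)
  have hpreT : ∀ n t, t ∈ T n → pre t ∈ T (n + 1) := by
    intro n t ht
    show F^[n + 1] (pre t) = α
    rw [Function.iterate_succ_apply, hFpre]
    exact ht
  have hpre2T : ∀ n t, t ∈ T n → 2 * a' - pre t ∈ T (n + 1) := by
    intro n t ht
    show F^[n + 1] (2 * a' - pre t) = α
    rw [Function.iterate_succ_apply, hFpre2]
    exact ht
  have hchar : (2 : E) ≠ 0 := two_ne_zero
  have hba : b' + α = 0 := by
    by_contra hba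
    -- T 1 has two elements
    have hsα : sqrt (b' + α) ≠ 0 := by
      intro h0
      apply hba
      rw [← hsqrt (b' + α), h0]
      ring
    have hne : pre α ≠ 2 * a' - pre α := by
      intro h
      rw [hpre] at h
      apply hsα
      have h2 : (2 : E) * sqrt (b' + α) = 0 := by linear_combination h
      rcases mul_eq_zero.mp h2 with h3 | h3
      · exact absurd h3 two_ne_zero
      · exact h3
    have hsub : ({pre α, 2 * a' - pre α} : Set E) ⊆ T 1 := by
      rintro x (rfl | rfl)
      · have := hpreT 0 α (by simp [hT]); simpa using this
      · have := hpre2T 0 α (by simp [hT]); simpa using this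
    have h2 : 2 ≤ (T 1).ncard := by
      rw [← Set.ncard_pair hne]
      exact Set.ncard_le_ncard hsub (hTfin 1 le_rfl)
    -- growth step
    have step : ∀ n, 1 ≤ n → 2 ≤ (T n).ncard → (T n).ncard + 1 ≤ (T (n + 1)).ncard := by
      intro n hn h2n
      -- find unramified point
      have hex : ∃ t0 ∈ T n, b' + t0 ≠ 0 := by
        by_contra hno
        push_neg at hno
        have : T n ⊆ {-b'} := by
          intro t ht
          have := hno t ht
          have : t = -b' := by linear_combination this
          simp [this]
        have := Set.ncard_le_ncard this (Set.finite_singleton _)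
        simp [Set.ncard_singleton] at this
        omega
      obtain ⟨t0, ht0, ht0r⟩ := hex
      have hst0 : sqrt (b' + t0) ≠ 0 := by
        intro h0
        apply ht0r
        rw [← hsqrt (b' + t0), h0]; ring
      have hu : pre t0 ∈ T (n + 1) := hpreT n t0 ht0
      have hu' : 2 * a' - pre t0 ∈ T (n + 1) := hpre2T n t0 ht0
      have huu' : pre t0 ≠ 2 * a' - pre t0 := by
        intro h
        rw [hpre] at h
        apply hst0
        have h2' : (2 : E) * sqrt (b' + t0) = 0 := by linear_combination h
        rcases mul_eq_zero.mp h2' with h3 | h3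
        · exact absurd h3 two_ne_zero
        · exact h3
      have hnotmem : 2 * a' - pre t0 ∉ pre '' T n := by
        rintro ⟨t, ht, hteq⟩
        have : t = t0 := by
          have := congrArg F hteq
          rwa [hFpre, hFpre2] at this
        rw [this] at hteq
        exact huu' hteq
      have hsub2 : insert (2 * a' - pre t0) (pre '' T n) ⊆ T (n + 1) := by
        rintro x (rfl | ⟨t, ht, rfl⟩)
        · exact hu'
        · exact hpreT n t ht
      have hcard : (insert (2 * a' - pre t0) (pre '' T n)).ncard = (T n).ncard + 1 := by
        rw [Set.ncard_insert_of_notMem hnotmem ((hTfin n hn).image pre),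
          Set.ncard_image_of_injective _ hpreinj]
      calc (T n).ncard + 1 = (insert (2 * a' - pre t0) (pre '' T n)).ncard := hcard.symm
        _ ≤ (T (n + 1)).ncard := Set.ncard_le_ncard hsub2 (hTfin (n + 1) (by omega))
    have grow : ∀ n, 1 ≤ n → n + 1 ≤ (T n).ncard := by
      intro n
      induction n with
      | zero => omega
      | succ n ih =>
        intro _
        by_cases hn : 1 ≤ n
        · have h1 := ih hn
          have h2' : 2 ≤ (T n).ncard := by omega
          have := step n hn h2'
          omega
        · have : n = 0 := by omega
          subst this
          simpa using h2
    have hbound : ∀ n, 1 ≤ n → (T n).ncard ≤ S.ncard :=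
      fun n hn => Set.ncard_le_ncard (hTS n hn) hSfin
    have c1 := grow (S.ncard + 1) (by omega)
    have c2 := hbound (S.ncard + 1) (by omega)
    omega
  -- conclusion
  refine ⟨1, le_rfl, ?_⟩
  have heval : f.eval a = -b := by rw [hf]; simp
  rw [Function.iterate_one, heval, map_neg]
  rw [← hb']
  linear_combination -hba
end

section
/- Let K be a number field, let f = (X − a)² − b ∈ K[X] be a monic quadratic polynomial which is post-critically infinite (the orbit {f^n(a) : n ≥ 1} is infinite), and let α be an element of a fixed algebraic closure K̄ of K. Then the compositum K_∞(f,α) of the splitting fields over K(α) of all the polynomials f^n(X) − α, n ≥ 1, is an infinite extension of K(α). -/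
open Polynomial

/-- If the full backward orbit of `α` under `z ↦ (z-A)^2 - B` over an algebraically closed
field of characteristic zero is finite, then `B = -A` (so `A` is a fixed critical point). -/
lemma auxB {F : Type*} [Field F] [IsAlgClosed F] [CharZero F] (A B α : F)
    (hS : {x : F | ∃ n : ℕ, 1 ≤ n ∧ (fun z => (z - A) ^ 2 - B)^[n] x = α}.Finite) :
    B = -A := by
  classical
  set Φ : F → F := fun z => (z - A) ^ 2 - B with hΦ
  set S : Set F := {x : F | ∃ n : ℕ, 1 ≤ n ∧ Φ^[n] x = α} with hSdef
  -- square roots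
  have hsq : ∀ w : F, ∃ s : F, s ^ 2 = w := fun w => IsAlgClosed.exists_pow_nat_eq w zero_lt_two
  choose s hs using hsq
  set T : Finset F := hS.toFinset with hT
  set W : Finset F := insert α T with hW
  -- preimage maps
  set gp : F → F := fun w => A + s (w + B) with hgp
  set gm : F → F := fun w => A - s (w + B) with hgm
  have hΦgp : ∀ w, Φ (gp w) = w := by
    intro w; simp only [hΦ, hgp]; rw [add_sub_cancel_left, hs]; ring
  have hΦgm : ∀ w, Φ (gm w) = w := by
    intro w
    have : (A - s (w + B) - A) ^ 2 = s (w + B) ^ 2 := by ring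
    simp only [hΦ, hgm]; rw [this, hs]; ring
  -- membership: preimages of W lie in T
  have hmem : ∀ w ∈ W, ∀ x : F, Φ x = w → x ∈ T := by
    intro w hw x hx
    have hxS : x ∈ S := by
      rcases Finset.mem_insert.mp hw with h | h
      · exact ⟨1, le_refl 1, by simpa [hx] using h⟩
      · have : w ∈ S := by rwa [hT, Set.Finite.mem_toFinset] at h
        obtain ⟨n, hn1, hn⟩ := this
        exact ⟨n + 1, by omega, by rw [Function.iterate_succ_apply, hx, hn]⟩
    rwa [hT, Set.Finite.mem_toFinset]
  have hgpW : ∀ w ∈ W, gp w ∈ T := fun w hw => hmem w hw _ (hΦgp w)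
  have hgmW : ∀ w ∈ W, gm w ∈ T := fun w hw => hmem w hw _ (hΦgm w)
  -- injectivity
  have hinjp : Set.InjOn gp W := by
    intro w _ w' _ h
    have := congrArg Φ h; rwa [hΦgp, hΦgp] at this
  have hinjm : Set.InjOn gm W := by
    intro w _ w' _ h
    have := congrArg Φ h; rwa [hΦgm, hΦgm] at this
  -- disjointness of the two images away from -B
  have hdisj : Disjoint (W.image gp) ((W.erase (-B)).image gm) := by
    rw [Finset.disjoint_left]
    intro x hxp hxm
    obtain ⟨w, hw, rfl⟩ := Finset.mem_image.mp hxp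
    obtain ⟨w', hw', he⟩ := Finset.mem_image.mp hxm
    have hww' : w' = w := by
      have := congrArg Φ he; rwa [hΦgm, hΦgp] at this
    subst hww'
    have hs0 : s (w' + B) = 0 := by
      have h' : A - s (w' + B) = A + s (w' + B) := he
      have h2 : (2 : F) * s (w' + B) = 0 := by linear_combination -h'
      exact (mul_eq_zero.mp h2).resolve_left two_ne_zero
    have hwB : w' = -B := by
      have h3 := hs (w' + B); rw [hs0] at h3
      linear_combination -h3
    exact (Finset.mem_erase.mp hw').1 hwB
  -- cardinality count
  have hsub : W.image gp ∪ (W.erase (-B)).image gm ⊆ T := by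
    intro x hx
    rcases Finset.mem_union.mp hx with h | h
    · obtain ⟨w, hw, rfl⟩ := Finset.mem_image.mp h; exact hgpW w hw
    · obtain ⟨w, hw, rfl⟩ := Finset.mem_image.mp h
      exact hgmW w (Finset.mem_of_mem_erase hw)
  have hcard : W.card + (W.erase (-B)).card ≤ T.card := by
    calc W.card + (W.erase (-B)).card
        = (W.image gp).card + ((W.erase (-B)).image gm).card := by
          rw [Finset.card_image_of_injOn hinjp,
            Finset.card_image_of_injOn (hinjm.mono (fun x hx => Finset.mem_of_mem_erase hx))]
      _ = (W.image gp ∪ (W.erase (-B)).image gm).card :=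
          (Finset.card_union_of_disjoint hdisj).symm
      _ ≤ T.card := Finset.card_le_card hsub
  have hWT : T.card ≤ W.card := Finset.card_le_card (Finset.subset_insert _ _)
  have herase : W.card - 1 ≤ (W.erase (-B)).card := Finset.pred_card_le_card_erase
  have hWpos : 0 < W.card := Finset.card_pos.mpr ⟨α, Finset.mem_insert_self _ _⟩
  -- α ∈ T, else contradiction
  have hαT : α ∈ T := by
    by_contra hα
    have : W.card = T.card + 1 := Finset.card_insert_of_notMem hα
    omega
  have hWeq : W.card = T.card := by
    rw [hW, Finset.insert_eq_self.mpr hαT]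
  have hT1 : T.card ≤ 1 := by omega
  -- now T = {α}, and both preimages of α equal α
  have hαW : α ∈ W := Finset.mem_insert_self _ _
  have hgpα : gp α = α := by
    have h1 := hgpW α hαW
    have := Finset.card_le_one.mp hT1 _ h1 _ hαT
    exact this
  have hgmα : gm α = α := by
    have h1 := hgmW α hαW
    have := Finset.card_le_one.mp hT1 _ h1 _ hαT
    exact this
  have hs0 : s (α + B) = 0 := by
    have h' : gp α = gm α := by rw [hgpα, hgmα]
    simp only [hgp, hgm] at h'
    have h2 : (2 : F) * s (α + B) = 0 := by linear_combination h'
    exact (mul_eq_zero.mp h2).resolve_left two_ne_zero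
  have hαA : α = A := by
    have h' := hgpα; simp only [hgp, hs0, add_zero] at h'; exact h'.symm
  have hαB : α + B = 0 := by
    have h3 := hs (α + B); rw [hs0] at h3
    linear_combination -h3
  linear_combination hαB - hαA

/-- One-step denominator control for preimages under `z ↦ (z-A)^2 - B`. -/
lemma step_int {F : Type*} [Field F] [CharZero F] {A B : F} {d : ℤ}
    (hA : IsIntegral ℤ ((d : F) * A)) (hB : IsIntegral ℤ ((d : F) * B))
    {x : F} (hx : IsIntegral ℤ ((d : F) * ((x - A) ^ 2 - B))) :
    IsIntegral ℤ ((d : F) * x) := by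
  have hd : IsIntegral ℤ ((d : F)) := by
    simpa using isIntegral_algebraMap (R := ℤ) (A := F) (x := d)
  have h2 : IsIntegral ℤ (((d : F) * (x - A)) ^ 2) := by
    have : ((d : F) * (x - A)) ^ 2
        = (d : F) * ((d : F) * ((x - A) ^ 2 - B)) + (d : F) * ((d : F) * B) := by ring
    rw [this]
    exact (hd.mul hx).add (hd.mul hB)
  have h1 : IsIntegral ℤ ((d : F) * (x - A)) := h2.of_pow zero_lt_two
  have : (d : F) * x = (d : F) * (x - A) + (d : F) * A := by ring
  rw [this]
  exact h1.add hA

/-- One-step bound for preimages under `z ↦ (z-cA)^2 - cB` in `ℂ`. -/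
lemma step_bd {cA cB : ℂ} {M : ℝ} (hM : 2 * ‖cA‖ + 2 * ‖cB‖ + 2 ≤ M)
    {z : ℂ} (h : ‖(z - cA) ^ 2 - cB‖ ≤ M) : ‖z‖ ≤ M := by
  have h1 : ‖(z - cA) ^ 2‖ ≤ M + ‖cB‖ := by
    calc ‖(z - cA) ^ 2‖ = ‖(z - cA) ^ 2 - cB + cB‖ := by ring_nf
      _ ≤ ‖(z - cA) ^ 2 - cB‖ + ‖cB‖ := norm_add_le _ _
      _ ≤ M + ‖cB‖ := by linarith
  have h2 : ‖z - cA‖ ^ 2 ≤ M + ‖cB‖ := by rwa [← norm_pow]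
  have h3 : ‖z‖ ≤ ‖cA‖ + ‖z - cA‖ := by
    calc ‖z‖ = ‖cA + (z - cA)‖ := by ring_nf
      _ ≤ ‖cA‖ + ‖z - cA‖ := norm_add_le _ _
  have h4 : (0:ℝ) ≤ ‖z - cA‖ := norm_nonneg _
  have h5 : (0:ℝ) ≤ ‖cA‖ := norm_nonneg _
  have h6 : (0:ℝ) ≤ ‖cB‖ := norm_nonneg _
  nlinarith [sq_nonneg (‖z - cA‖ - (M - ‖cA‖))]

set_option maxHeartbeats 1600000 in
/-- Over a number field `K`, if `f = (X-a)^2 - b` is post-critically infinite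
then, for any `α` in a fixed algebraic closure, the compositum over `K(α)` of the splitting
fields of the `f^n(X) - α` is an infinite extension of `K(α)`. -/
theorem stmt_7 (K : Type*) [Field K] [NumberField K] (a b : K)
    (f : K[X]) (hf : f = (X - C a) ^ 2 - C b)
    (hpci : Set.Infinite {x : K | ∃ n : ℕ, 1 ≤ n ∧ (fun x => f.eval x)^[n] a = x})
    (α : AlgebraicClosure K) :
    ¬ FiniteDimensional
      (IntermediateField.adjoin K ({α} : Set (AlgebraicClosure K)))
      (IntermediateField.adjoin
        (↥(IntermediateField.adjoin K ({α} : Set (AlgebraicClosure K))))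
        {x : AlgebraicClosure K | ∃ n : ℕ, 1 ≤ n ∧
          Polynomial.aeval x ((fun p => p.comp f)^[n] X) = α}) := by
  intro hfin
  classical
  set A : AlgebraicClosure K := algebraMap K (AlgebraicClosure K) a with hA
  set B : AlgebraicClosure K := algebraMap K (AlgebraicClosure K) b with hB
  set Φ : AlgebraicClosure K → AlgebraicClosure K := fun z => (z - A) ^ 2 - B with hΦdef
  haveI : CharZero (AlgebraicClosure K) := charZero_of_injective_algebraMap (algebraMap K (AlgebraicClosure K)).injective
  -- identify the defining set with iterated preimages of α under Φ
  have hiter : ∀ (x : (AlgebraicClosure K)) (n : ℕ), aeval x ((fun p => p.comp f)^[n] X) = Φ^[n] x := by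
    intro x n
    induction n generalizing x with
    | zero => simp
    | succ n ih =>
      rw [Function.iterate_succ_apply', Polynomial.aeval_comp, Function.iterate_succ_apply]
      have hfx : aeval x f = Φ x := by
        rw [hf]
        simp only [map_sub, map_pow, aeval_X, aeval_C, hΦdef]
        rfl
      rw [hfx, ih]
  set S : Set (AlgebraicClosure K) := {x : (AlgebraicClosure K) | ∃ n : ℕ, 1 ≤ n ∧ aeval x ((fun p => p.comp f)^[n] X) = α}
    with hSdef
  have hSΦ : S = {x : (AlgebraicClosure K) | ∃ n : ℕ, 1 ≤ n ∧ Φ^[n] x = α} := by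
    ext x; simp only [hSdef, Set.mem_setOf_eq, hiter]
  set E := IntermediateField.adjoin K ({α} : Set (AlgebraicClosure K)) with hE
  set L := IntermediateField.adjoin (↥E) S with hL
  -- finiteness instances
  haveI : Algebra.IsAlgebraic K (AlgebraicClosure K) := inferInstance
  haveI : FiniteDimensional K ↥E :=
    IntermediateField.adjoin.finiteDimensional
      ((Algebra.IsAlgebraic.isAlgebraic (R := K) α).isIntegral)
  haveI : FiniteDimensional ℚ ↥E := Module.Finite.trans (R := ℚ) K ↥E
  haveI : FiniteDimensional ℚ ↥L := Module.Finite.trans (R := ℚ) ↥E ↥L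
  haveI : NumberField ↥L := ⟨⟩
  -- memberships
  have hαE : α ∈ E := IntermediateField.mem_adjoin_simple_self K α
  have hαL : α ∈ L := by
    have := L.algebraMap_mem ⟨α, hαE⟩
    simpa using this
  have hAL : A ∈ L := by
    have hAE : A ∈ E := E.algebraMap_mem a
    have := L.algebraMap_mem ⟨A, hAE⟩
    simpa using this
  have hBL : B ∈ L := by
    have hBE : B ∈ E := E.algebraMap_mem b
    have := L.algebraMap_mem ⟨B, hBE⟩
    simpa using this
  have hSL : ∀ x ∈ S, x ∈ L := fun x hx => IntermediateField.subset_adjoin _ _ hx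
  -- common denominator
  haveI : Algebra.IsAlgebraic ℚ K := Algebra.IsAlgebraic.of_finite ℚ K
  haveI : Algebra.IsAlgebraic ℚ (AlgebraicClosure K) := Algebra.IsAlgebraic.trans ℚ K (AlgebraicClosure K)
  have hinj : ∀ x : ℤ, algebraMap ℤ (AlgebraicClosure K) x = 0 → x = 0 := by
    intro x hx
    exact (algebraMap ℤ (AlgebraicClosure K)).injective_int (hx.trans (map_zero _).symm)
  have halg : ∀ z : (AlgebraicClosure K), IsAlgebraic ℤ z :=
    fun z => (IsFractionRing.isAlgebraic_iff ℤ ℚ (AlgebraicClosure K)).mpr (Algebra.IsAlgebraic.isAlgebraic z)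
  have hd_int : ∀ m : ℤ, IsIntegral ℤ ((m : (AlgebraicClosure K))) := fun m => by
    simpa using isIntegral_algebraMap (R := ℤ) (A := (AlgebraicClosure K)) (x := m)
  have hexi : ∀ z : AlgebraicClosure K, ∃ (x : integralClosure ℤ (AlgebraicClosure K)) (y : ℤ),
      y ≠ 0 ∧ (y : AlgebraicClosure K) * z = x := by
    intro z
    obtain ⟨y, hy0, hyint⟩ := (halg z).exists_integral_multiple
    rw [Algebra.smul_def, eq_intCast] at hyint
    exact ⟨⟨_, hyint⟩, y, hy0, rfl⟩
  obtain ⟨yA, dA, hdA0, hdA⟩ := hexi A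
  obtain ⟨yB, dB, hdB0, hdB⟩ := hexi B
  obtain ⟨yα, dα, hdα0, hdα⟩ := hexi α
  set d : ℤ := dA * dB * dα with hd
  have hd0 : d ≠ 0 := mul_ne_zero (mul_ne_zero hdA0 hdB0) hdα0
  have hIA : IsIntegral ℤ ((d : (AlgebraicClosure K)) * A) := by
    have h1 : IsIntegral ℤ ((dA : (AlgebraicClosure K)) * A) := by
      rw [hdA]; exact yA.2
    have : ((d : ℤ) : AlgebraicClosure K) * A = ((dB * dα : ℤ) : AlgebraicClosure K) * ((dA : AlgebraicClosure K) * A) := by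
      rw [hd]; push_cast [Int.cast_mul]; ring
    rw [this]; exact (hd_int _).mul h1
  have hIB : IsIntegral ℤ ((d : (AlgebraicClosure K)) * B) := by
    have h1 : IsIntegral ℤ ((dB : (AlgebraicClosure K)) * B) := by
      rw [hdB]; exact yB.2
    have : ((d : ℤ) : AlgebraicClosure K) * B = ((dA * dα : ℤ) : AlgebraicClosure K) * ((dB : AlgebraicClosure K) * B) := by
      rw [hd]; push_cast [Int.cast_mul]; ring
    rw [this]; exact (hd_int _).mul h1
  have hIα : IsIntegral ℤ ((d : (AlgebraicClosure K)) * α) := by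
    have h1 : IsIntegral ℤ ((dα : (AlgebraicClosure K)) * α) := by
      rw [hdα]; exact yα.2
    have : ((d : ℤ) : AlgebraicClosure K) * α = ((dA * dB : ℤ) : AlgebraicClosure K) * ((dα : AlgebraicClosure K) * α) := by
      rw [hd]; push_cast [Int.cast_mul]; ring
    rw [this]; exact (hd_int _).mul h1
  -- integrality of scaled preimages
  have hint : ∀ (n : ℕ) (x : (AlgebraicClosure K)), Φ^[n] x = α → IsIntegral ℤ ((d : (AlgebraicClosure K)) * x) := by
    intro n
    induction n with
    | zero => intro x hx; simp only [Function.iterate_zero_apply] at hx; rw [hx]; exact hIα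
    | succ n ih =>
      intro x hx
      rw [Function.iterate_succ_apply] at hx
      exact step_int hIA hIB (ih _ hx)
  -- bound on conjugates
  set Ah : ↥L := ⟨A, hAL⟩ with hAh
  set Bh : ↥L := ⟨B, hBL⟩ with hBh
  set αh : ↥L := ⟨α, hαL⟩ with hαh
  obtain ⟨Cb, hCb⟩ :=
    (Set.finite_range (fun φ : ↥L →+* ℂ => 2 * ‖φ Ah‖ + 2 * ‖φ Bh‖ + ‖φ αh‖)).bddAbove
  set M : ℝ := max Cb 0 + 2 with hM
  have hM1 : ∀ φ : ↥L →+* ℂ, 2 * ‖φ Ah‖ + 2 * ‖φ Bh‖ + 2 ≤ M := by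
    intro φ
    have h1 := hCb (Set.mem_range_self φ)
    have h2 : (0:ℝ) ≤ ‖φ αh‖ := norm_nonneg _
    have h3 : Cb ≤ max Cb 0 := le_max_left _ _
    simp only [hM]; linarith
  have hM2 : ∀ φ : ↥L →+* ℂ, ‖φ αh‖ ≤ M := by
    intro φ
    have h1 := hCb (Set.mem_range_self φ)
    have h2 : (0:ℝ) ≤ ‖φ Ah‖ := norm_nonneg _
    have h3 : (0:ℝ) ≤ ‖φ Bh‖ := norm_nonneg _
    have h4 : Cb ≤ max Cb 0 := le_max_left _ _
    simp only [hM]; linarith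
  have hM0 : (0:ℝ) ≤ M := by
    simp only [hM]; have := le_max_right Cb 0; linarith
  have hbd : ∀ (φ : ↥L →+* ℂ) (n : ℕ) (x : (AlgebraicClosure K)) (hxL : x ∈ L),
      Φ^[n] x = α → ‖φ ⟨x, hxL⟩‖ ≤ M := by
    intro φ n
    induction n with
    | zero =>
      intro x hxL hx
      simp only [Function.iterate_zero_apply] at hx
      subst hx
      exact hM2 φ
    | succ n ih =>
      intro x hxL hx
      rw [Function.iterate_succ_apply] at hx
      have hΦxL : Φ x ∈ L := sub_mem (pow_mem (sub_mem hxL hAL) 2) hBL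
      have hy := ih (Φ x) hΦxL hx
      have heq : ((⟨x, hxL⟩ : ↥L) - Ah) ^ 2 - Bh = ⟨Φ x, hΦxL⟩ := by
        apply Subtype.ext
        push_cast
        simp only [hΦdef]
        rfl
      have heq2 : (φ ⟨x, hxL⟩ - φ Ah) ^ 2 - φ Bh = φ ⟨Φ x, hΦxL⟩ := by
        rw [← map_sub, ← map_pow, ← map_sub, heq]
      exact step_bd (hM1 φ) (by rw [heq2]; exact hy)
  -- Northcott: S is finite
  have hdL0 : ((d : ℤ) : ↥L) ≠ 0 := Int.cast_ne_zero.mpr hd0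
  have hSfin : S.Finite := by
    have hNor := NumberField.Embeddings.finite_of_norm_le ↥L ℂ (‖((d : ℤ) : ℂ)‖ * M)
    apply Set.Finite.subset (hNor.image (fun y : ↥L => (((((d : ℤ) : ↥L))⁻¹ * y : ↥L) : (AlgebraicClosure K))))
    intro x hx
    have hxL : x ∈ L := hSL x hx
    have hx' : x ∈ {x : AlgebraicClosure K | ∃ n : ℕ, 1 ≤ n ∧ Φ^[n] x = α} := by
      rw [← hSΦ]; exact hx
    obtain ⟨n, hn1, hn⟩ := hx' 
    refine ⟨((d : ℤ) : ↥L) * ⟨x, hxL⟩, ⟨?_, ?_⟩, ?_⟩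
    · -- integrality
      have h1 : IsIntegral ℤ ((d : AlgebraicClosure K) * x) := hint n x hn
      set ψ : ↥L →ₐ[ℤ] AlgebraicClosure K := (L.val.toRingHom).toIntAlgHom with hψ
      have hψinj : Function.Injective ψ := Subtype.val_injective
      have h2 : ψ (((d : ℤ) : ↥L) * ⟨x, hxL⟩) = (d : AlgebraicClosure K) * x := by
        rw [map_mul, map_intCast]
        rfl
      exact (isIntegral_algHom_iff ψ hψinj).mp (h2 ▸ h1)
    · -- bound
      intro φ
      rw [map_mul, map_intCast, norm_mul]
      exact mul_le_mul_of_nonneg_left (hbd φ n x hxL hn) (norm_nonneg _)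
    · -- value
      simp only
      rw [inv_mul_cancel_left₀ hdL0]
  -- conclude via the counting lemma
  rw [hSΦ] at hSfin
  have hBA : B = -A := auxB A B α hSfin
  have hab : b = -a := by
    apply (algebraMap K (AlgebraicClosure K)).injective
    rw [map_neg]
    exact hBA
  have hfa : f.eval a = a := by
    rw [hf]; simp [hab]
  refine hpci (Set.Finite.subset (Set.finite_singleton a) ?_)
  rintro x ⟨n, hn1, hn⟩
  rw [Function.iterate_fixed hfa n] at hn
  exact hn ▸ rfl
end

section
/- Let K be a number field, let f = (X − a)² − b ∈ K[X] be a monic quadratic polynomial, and let α be an element of a fixed algebraic closure K̄ of K. Then the compositum K_∞(f,α) of the splitting fields over K(α) of all the polynomials f^n(X) − α, n ≥ 1, is a finite extension of K(α) if and only if α is exceptional for f. -/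
open Polynomial
-- denominator lemma
theorem den_lem {L : Type*} [Field L] [NumberField L] (z : L) :
    ∃ d : ℤ, d ≠ 0 ∧ IsIntegral ℤ ((d : L) * z) := by
  have halg : IsAlgebraic ℤ z := by
    rw [IsFractionRing.isAlgebraic_iff ℤ ℚ L]
    exact Algebra.IsAlgebraic.isAlgebraic z
  obtain ⟨y, hy0, hint⟩ := halg.exists_integral_multiple
  refine ⟨y, hy0, ?_⟩
  rw [← zsmul_eq_mul]
  exact hint

theorem core_lem {L : Type*} [Field L] [NumberField L] (A B Γ : L) :
    {x : L | ∃ n : ℕ, (fun t => (t - A) ^ 2 - B)^[n] x = Γ}.Finite := by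
  classical
  obtain ⟨d1, hd1, hA1⟩ := den_lem A
  obtain ⟨d2, hd2, hB1⟩ := den_lem B
  obtain ⟨d3, hd3, hΓ1⟩ := den_lem Γ
  set d : ℤ := d1 * d2 * d3 with hd_def
  have hd : d ≠ 0 := by simp [hd_def, hd1, hd2, hd3]
  have hdL : ((d : L)) ≠ 0 := by exact_mod_cast fun h => hd (by exact_mod_cast h)
  have hcast : ((d : ℤ) : L) = (d1 : L) * (d2 : L) * (d3 : L) := by
    rw [hd_def]; push_cast; ring
  have intcast : ∀ m : ℤ, IsIntegral ℤ ((m : L)) := fun m => by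
    simpa [eq_intCast] using isIntegral_algebraMap (R := ℤ) (A := L) (x := m)
  have hA : IsIntegral ℤ ((d : L) * A) := by
    have : (d : L) * A = ((d2 * d3 : ℤ) : L) * ((d1 : L) * A) := by rw [hcast]; push_cast; ring
    rw [this]; exact (intcast _).mul hA1
  have hB : IsIntegral ℤ ((d : L) ^ 2 * B) := by
    have : (d : L) ^ 2 * B = ((d1 * d3 * d : ℤ) : L) * ((d2 : L) * B) := by
      rw [show ((d1 * d3 * d : ℤ) : L) = (d1 : L) * (d3 : L) * (d : L) by push_cast; ring, hcast]
      ring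
    rw [this]; exact (intcast _).mul hB1
  have hΓ : IsIntegral ℤ ((d : L) * Γ) := by
    have : (d : L) * Γ = ((d1 * d2 : ℤ) : L) * ((d3 : L) * Γ) := by rw [hcast]; push_cast; ring
    rw [this]; exact (intcast _).mul hΓ1
  set F : L → L := fun t => (t - A) ^ 2 - B with hF
  -- integrality of the backward orbit
  have hInt : ∀ n : ℕ, ∀ x : L, F^[n] x = Γ → IsIntegral ℤ ((d : L) * x) := by
    intro n
    induction n with
    | zero => intro x hx; simp only [Function.iterate_zero, id_eq] at hx; rw [hx]; exact hΓ
    | succ n ih =>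
      intro x hx
      rw [Function.iterate_succ_apply] at hx
      have hFx := ih (F x) hx
      have key : ((d : L) * x - (d : L) * A) ^ 2
          = (d : L) * ((d : L) * F x) + (d : L) ^ 2 * B := by
        simp only [hF]; ring
      have h2 : IsIntegral ℤ (((d : L) * x - (d : L) * A) ^ 2) := by
        rw [key]; exact ((intcast d).mul hFx).add hB
      have h3 : IsIntegral ℤ ((d : L) * x - (d : L) * A) :=
        IsIntegral.of_pow two_pos h2
      have h4 : (d : L) * x = ((d : L) * x - (d : L) * A) + (d : L) * A := by ring
      rw [h4]; exact h3.add hA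
  -- archimedean bounds
  have hArch : ∀ φ : L →+* ℂ, ∀ n : ℕ, ∀ x : L, F^[n] x = Γ →
      ‖φ x‖ ≤ (‖φ A‖ + ‖φ B‖ + ‖φ Γ‖ + 2) ^ 2 := by
    intro φ n
    induction n with
    | zero =>
      intro x hx; simp only [Function.iterate_zero, id_eq] at hx; rw [hx]
      nlinarith [norm_nonneg (φ A), norm_nonneg (φ B), norm_nonneg (φ Γ)]
    | succ n ih =>
      intro x hx
      rw [Function.iterate_succ_apply] at hx
      have hFx := ih (F x) hx
      set s : ℝ := ‖φ A‖ + ‖φ B‖ + ‖φ Γ‖ + 2 with hs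
      have he : (φ x - φ A) ^ 2 = φ (F x) + φ B := by
        simp only [hF, map_sub, map_pow]; ring
      have ht : ‖φ x - φ A‖ ^ 2 ≤ s ^ 2 + s := by
        calc ‖φ x - φ A‖ ^ 2 = ‖(φ x - φ A) ^ 2‖ := by rw [norm_pow]
          _ = ‖φ (F x) + φ B‖ := by rw [he]
          _ ≤ ‖φ (F x)‖ + ‖φ B‖ := norm_add_le _ _
          _ ≤ s ^ 2 + s := by
              have : ‖φ B‖ ≤ s := by
                nlinarith [norm_nonneg (φ A), norm_nonneg (φ Γ), norm_nonneg (φ B)]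
              linarith
      have hx2 : ‖φ x‖ ≤ ‖φ A‖ + ‖φ x - φ A‖ := by
        calc ‖φ x‖ = ‖φ A + (φ x - φ A)‖ := by ring_nf
          _ ≤ ‖φ A‖ + ‖φ x - φ A‖ := norm_add_le _ _
      have hs2 : (2 : ℝ) ≤ s ∧ ‖φ A‖ + 2 ≤ s := by
        constructor <;>
          nlinarith [norm_nonneg (φ A), norm_nonneg (φ B), norm_nonneg (φ Γ)]
      nlinarith [norm_nonneg (φ x - φ A), sq_nonneg (‖φ x - φ A‖ - (s + 1)),
        norm_nonneg (φ A), hs2.1, hs2.2]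
  -- assemble
  obtain ⟨Bb, hBb⟩ := (Set.finite_range
    (fun φ : L →+* ℂ => (‖φ A‖ + ‖φ B‖ + ‖φ Γ‖ + 2) ^ 2)).bddAbove
  have hfin := NumberField.Embeddings.finite_of_norm_le L ℂ (|(d : ℝ)| * Bb)
  have himg : ((fun x : L => (d : L) * x) '' {x : L | ∃ n : ℕ, F^[n] x = Γ}) ⊆
      {x : L | IsIntegral ℤ x ∧ ∀ φ : L →+* ℂ, ‖φ x‖ ≤ |(d : ℝ)| * Bb} := by
    rintro _ ⟨x, ⟨n, hn⟩, rfl⟩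
    refine ⟨hInt n x hn, fun φ => ?_⟩
    have : ‖φ ((d : L) * x)‖ = |(d : ℝ)| * ‖φ x‖ := by
      rw [map_mul, norm_mul]
      congr 1
      rw [map_intCast]
      simp
    rw [this]
    have h1 : (‖φ A‖ + ‖φ B‖ + ‖φ Γ‖ + 2) ^ 2 ≤ Bb := hBb ⟨φ, rfl⟩
    have h2 := hArch φ n x hn
    have h3 : (0:ℝ) ≤ |(d : ℝ)| := abs_nonneg _
    nlinarith [norm_nonneg (φ x)]
  have : ((fun x : L => (d : L) * x) '' {x : L | ∃ n : ℕ, F^[n] x = Γ}).Finite :=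
    hfin.subset himg
  exact Set.Finite.of_finite_image this
    (Function.Injective.injOn (mul_right_injective₀ hdL))
-- iterate/aeval compatibility
theorem iter_aeval {K : Type*} [Field K] (a b : K) (f : K[X]) (hf : f = (X - C a) ^ 2 - C b)
    {A : Type*} [CommRing A] [Algebra K A] (n : ℕ) (x : A) :
    aeval x ((fun p => p.comp f)^[n] X) =
      (fun t => (t - algebraMap K A a) ^ 2 - algebraMap K A b)^[n] x := by
  have key : ∀ (n : ℕ) (p : K[X]) (x : A), aeval x ((fun p => p.comp f)^[n] p) =
      aeval ((fun t => (t - algebraMap K A a) ^ 2 - algebraMap K A b)^[n] x) p := by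
    intro n
    induction n with
    | zero => intro p x; simp
    | succ n ih =>
      intro p x
      rw [Function.iterate_succ_apply]
      rw [ih (p.comp f) x]
      rw [aeval_comp]
      rw [Function.iterate_succ_apply']
      congr 1
      simp [hf]
  simpa using key n X x

/-- Over a number field `K`, for `f = (X-a)^2 - b` and `α` in a fixed algebraic
closure, the compositum over `K(α)` of the splitting fields of the `f^n(X) - α` is a finite
extension of `K(α)` iff `α` is exceptional for `f` (finite backward orbit). -/
theorem stmt_8 (K : Type*) [Field K] [NumberField K] (a b : K)
    (f : K[X]) (hf : f = (X - C a) ^ 2 - C b) (α : AlgebraicClosure K) :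
    FiniteDimensional
      (IntermediateField.adjoin K ({α} : Set (AlgebraicClosure K)))
      (IntermediateField.adjoin
        (↥(IntermediateField.adjoin K ({α} : Set (AlgebraicClosure K))))
        {x : AlgebraicClosure K | ∃ n : ℕ, 1 ≤ n ∧
          Polynomial.aeval x ((fun p => p.comp f)^[n] X) = α}) ↔
      Set.Finite {x : AlgebraicClosure K | ∃ n : ℕ, 1 ≤ n ∧
        Polynomial.aeval x ((fun p => p.comp f)^[n] X) = α} := by
  classical
  set aA : AlgebraicClosure K := algebraMap K (AlgebraicClosure K) a with haA
  set bA : AlgebraicClosure K := algebraMap K (AlgebraicClosure K) b with hbA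
  have Sdef : {x : AlgebraicClosure K | ∃ n : ℕ, 1 ≤ n ∧
      Polynomial.aeval x ((fun p => p.comp f)^[n] X) = α} =
      {x : AlgebraicClosure K | ∃ n : ℕ, 1 ≤ n ∧
        (fun t => (t - aA) ^ 2 - bA)^[n] x = α} := by
    ext x
    simp only [Set.mem_setOf_eq, iter_aeval a b f hf, haA, hbA]
  rw [Sdef]
  set S : Set (AlgebraicClosure K) := {x : AlgebraicClosure K | ∃ n : ℕ, 1 ≤ n ∧
    (fun t => (t - aA) ^ 2 - bA)^[n] x = α} with hS
  set Kα := IntermediateField.adjoin K ({α} : Set (AlgebraicClosure K)) with hKα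
  constructor
  · -- hard direction
    intro h
    set E := IntermediateField.adjoin (↥Kα) S with hE
    haveI : FiniteDimensional K ↥Kα :=
      IntermediateField.adjoin.finiteDimensional
        ((AlgebraicClosure.isAlgebraic K).isAlgebraic α).isIntegral
    haveI : NumberField ↥Kα := NumberField.of_module_finite K ↥Kα
    haveI : Module.Finite ↥Kα ↥E := h
    haveI : NumberField ↥E := NumberField.of_module_finite ↥Kα ↥E
    -- elements of E
    have hαKα : α ∈ Kα := by
      rw [hKα]; exact IntermediateField.subset_adjoin K _ rfl
    have hαE : α ∈ E := by
      have := E.algebraMap_mem (⟨α, hαKα⟩ : ↥Kα)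
      simpa using this
    have haE : aA ∈ E := by
      have haKα : aA ∈ Kα := Kα.algebraMap_mem a
      have := E.algebraMap_mem (⟨aA, haKα⟩ : ↥Kα)
      simpa using this
    have hbE : bA ∈ E := by
      have hbKα : bA ∈ Kα := Kα.algebraMap_mem b
      have := E.algebraMap_mem (⟨bA, hbKα⟩ : ↥Kα)
      simpa using this
    set αE : ↥E := ⟨α, hαE⟩
    set aE : ↥E := ⟨aA, haE⟩
    set bE : ↥E := ⟨bA, hbE⟩
    set FE : ↥E → ↥E := fun t => (t - aE) ^ 2 - bE with hFE
    have hcomm : ∀ (n : ℕ) (y : ↥E), ((FE^[n] y : ↥E) : AlgebraicClosure K) = (fun t => (t - aA) ^ 2 - bA)^[n] (y : AlgebraicClosure K) := by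
      intro n
      induction n with
      | zero => intro y; simp
      | succ n ih =>
        intro y
        rw [Function.iterate_succ_apply', Function.iterate_succ_apply', ← ih y]
        rfl
    have hfin := core_lem aE bE αE
    have hsub : S ⊆ Subtype.val '' {y : ↥E | ∃ n : ℕ, FE^[n] y = αE} := by
      intro x hx
      have hxE : x ∈ E := IntermediateField.subset_adjoin (↥Kα) S hx
      obtain ⟨n, hn1, hn⟩ := hx
      refine ⟨⟨x, hxE⟩, ⟨n, ?_⟩, rfl⟩
      apply Subtype.ext
      rw [hcomm n ⟨x, hxE⟩]
      exact hn
    exact (hfin.image Subtype.val).subset hsub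
  · -- easy direction
    intro h
    haveI : Finite ↥S := h.to_subtype
    apply IntermediateField.finiteDimensional_adjoin
    intro x _
    exact (((AlgebraicClosure.isAlgebraic K).isAlgebraic x).isIntegral).tower_top
end

section
/- Let G be a profinite group (a compact, Hausdorff, totally disconnected topological group) which is topologically finitely generated, and let H be an open subgroup of G. Then H is topologically finitely generated. -/
/-- An open subgroup of a topologically finitely generated profinite group is
topologically finitely generated. -/
theorem stmt_10 (G : Type*) [Group G] [TopologicalSpace G] [IsTopologicalGroup G]
    [CompactSpace G] [T2Space G] [TotallyDisconnectedSpace G]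
    (hG : ∃ S : Set G, S.Finite ∧ (Subgroup.closure S).topologicalClosure = ⊤)
    (H : Subgroup G) (hH : IsOpen (H : Set G)) :
    ∃ T : Set H, T.Finite ∧ (Subgroup.closure T).topologicalClosure = ⊤ := by
  obtain ⟨S, hSfin, hSdense⟩ := hG
  set Γ := Subgroup.closure S with hΓ
  -- H has finite index
  haveI : Finite (G ⧸ H) := H.quotient_finite_of_isOpen hH
  haveI : H.FiniteIndex := Subgroup.finiteIndex_of_finite_quotient (H := H)
  -- Γ is finitely generated
  haveI : Group.FG Γ :=
    (Group.fg_iff_subgroup_fg Γ).mpr ((Subgroup.fg_iff Γ).mpr ⟨S, rfl, hSfin⟩)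
  haveI : (H.subgroupOf Γ).FiniteIndex := Subgroup.instFiniteIndex_subgroupOf H Γ
  -- Schreier: H ∩ Γ is finitely generated
  haveI : Group.FG (H.subgroupOf Γ) := Subgroup.fg_of_index_ne_zero _
  -- transfer along H.subgroupOf Γ ≃* Γ.subgroupOf H
  have e1 : H.subgroupOf Γ ≃* ↥(H ⊓ Γ) := by
    rw [show H.subgroupOf Γ = (H ⊓ Γ).subgroupOf Γ from
      (Subgroup.inf_subgroupOf_right H Γ).symm]
    exact Subgroup.subgroupOfEquivOfLe inf_le_right
  have e2 : ↥(H ⊓ Γ) ≃* Γ.subgroupOf H := by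
    rw [show Γ.subgroupOf H = (H ⊓ Γ).subgroupOf H from
      (Subgroup.inf_subgroupOf_left Γ H).symm]
    exact (Subgroup.subgroupOfEquivOfLe inf_le_left).symm
  haveI : Group.FG (Γ.subgroupOf H) :=
    Group.fg_of_surjective (f := ((e1.trans e2) : ↥(H.subgroupOf Γ) →* ↥(Γ.subgroupOf H)))
      (e1.trans e2).surjective
  obtain ⟨T, hTclosure, hTfin⟩ := (Subgroup.fg_iff _).mp
    ((Group.fg_iff_subgroup_fg (Γ.subgroupOf H)).mp ‹_›)
  refine ⟨T, hTfin, ?_⟩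
  rw [hTclosure]
  -- density
  have hΓdense : Dense (Γ : Set G) := by
    rw [dense_iff_closure_eq, ← Subgroup.topologicalClosure_coe, hSdense, Subgroup.coe_top]
  rw [SetLike.ext'_iff, Subgroup.topologicalClosure_coe, Subgroup.coe_top]
  rw [← dense_iff_closure_eq]
  intro x
  have : (x : G) ∈ closure ((H : Set G) ∩ (Γ : Set G)) :=
    hΓdense.open_subset_closure_inter hH x.2
  rw [closure_subtype]
  convert this using 2
  ext g
  simp only [Set.mem_image, Set.mem_inter_iff, SetLike.mem_coe, Subgroup.mem_subgroupOf]
  constructor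
  · rintro ⟨y, hy, rfl⟩; exact ⟨y.2, hy⟩
  · rintro ⟨hg, hΓg⟩; exact ⟨⟨g, hg⟩, hΓg, rfl⟩
end

section
/- Let K be a number field, a ∈ K, and f = X² + a ∈ K[X], and let {c_n} be the adjusted post-critical orbit of f (c_1 = −a and c_n = f^n(0) for n ≥ 2); assume c_n ≠ 0 for every n ≥ 1 (equivalently, 0 is not periodic for f). Fix a finite place v of K with additive valuation v, suppose v(c_1) ≥ 0, and suppose there exists an index i with v(c_i) > 0; let n be the minimal such index. Then for every m ≥ 1: if n divides m then v(c_m) = v(c_n), and otherwise v(c_m) = 0. -/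
open Polynomial IsDedekindDomain

/-- The normalized additive valuation associated to a finite place `v` of a number field `K`,
extended by `0` at `0`.  (So `addVal K v π = 1` for a uniformizer `π` of `v`.) -/
noncomputable def addVal (K : Type*) [Field K] [NumberField K]
    (v : HeightOneSpectrum (NumberField.RingOfIntegers K)) (x : K) : ℤ :=
  if h : v.valuation K x = 0 then 0 else -Multiplicative.toAdd (WithZero.unzero h)

section conv
variable {K : Type*} [Field K] [NumberField K]
  (v : HeightOneSpectrum (NumberField.RingOfIntegers K))

lemma addVal_spec {x : K} (hx : x ≠ 0) :
    v.valuation K x = ↑(Multiplicative.ofAdd (-(addVal K v x))) := by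
  have h : v.valuation K x ≠ 0 := by
    simpa [Valuation.zero_iff] using hx
  rw [addVal, dif_neg h, neg_neg, ofAdd_toAdd, WithZero.coe_unzero]

lemma addVal_le_one_iff {x : K} (hx : x ≠ 0) :
    v.valuation K x ≤ 1 ↔ 0 ≤ addVal K v x := by
  rw [addVal_spec v hx, ← WithZero.coe_one, WithZero.coe_le_coe, ← ofAdd_zero,
    Multiplicative.ofAdd_le]
  omega

lemma addVal_lt_one_iff {x : K} (hx : x ≠ 0) :
    v.valuation K x < 1 ↔ 0 < addVal K v x := by
  rw [addVal_spec v hx, ← WithZero.coe_one, WithZero.coe_lt_coe, ← ofAdd_zero,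
    Multiplicative.ofAdd_lt]
  omega

lemma addVal_eq_zero_iff {x : K} (hx : x ≠ 0) :
    v.valuation K x = 1 ↔ addVal K v x = 0 := by
  rw [addVal_spec v hx, ← WithZero.coe_one, WithZero.coe_inj, ← ofAdd_zero,
    Multiplicative.ofAdd.apply_eq_iff_eq]
  omega

lemma addVal_eq_iff {x y : K} (hx : x ≠ 0) (hy : y ≠ 0) :
    v.valuation K x = v.valuation K y ↔ addVal K v x = addVal K v y := by
  rw [addVal_spec v hx, addVal_spec v hy, WithZero.coe_inj,
    Multiplicative.ofAdd.apply_eq_iff_eq]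
  omega

end conv

section aux
variable {K : Type*} [Field K] {Γ : Type*} [LinearOrderedCommGroupWithZero Γ]
variable (w : Valuation K Γ) {a : K}

/-- integrality of the orbit -/
lemma aux_int_s13 (ha : w a ≤ 1) : ∀ m : ℕ, ∀ x : K, w x ≤ 1 →
    w ((fun y => y ^ 2 + a)^[m] x) ≤ 1 := by
  intro m
  induction m with
  | zero => intro x hx; simpa using hx
  | succ m ih =>
    intro x hx
    rw [Function.iterate_succ_apply']
    refine le_trans (w.map_add _ _) (max_le ?_ ha)
    rw [map_pow]
    exact pow_le_one' (ih x hx) 2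

/-- key lemma: `w (F^[m] x - F^[m] 0) ≤ (w x)^2` -/
lemma aux_key (ha : w a ≤ 1) : ∀ m : ℕ, 1 ≤ m → ∀ x : K, w x ≤ 1 →
    w ((fun y => y ^ 2 + a)^[m] x - (fun y => y ^ 2 + a)^[m] 0) ≤ (w x) ^ 2 := by
  intro m hm
  induction m, hm using Nat.le_induction with
  | base =>
    intro x hx
    simp only [Function.iterate_one]
    have : (x ^ 2 + a) - ((0:K) ^ 2 + a) = x ^ 2 := by ring
    rw [this, map_pow]
  | succ m hm ih =>
    intro x hx
    rw [Function.iterate_succ_apply', Function.iterate_succ_apply']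
    set u := (fun y => y ^ 2 + a)^[m] x with hu
    set z := (fun y => y ^ 2 + a)^[m] (0:K) with hz
    have key : (u ^ 2 + a) - (z ^ 2 + a) = (u - z) * (u + z) := by ring
    rw [key, map_mul]
    have h1 : w (u - z) ≤ (w x) ^ 2 := ih x hx
    have h2 : w (u + z) ≤ 1 := by
      refine le_trans (w.map_add _ _) (max_le (aux_int_s13 w ha m x hx) ?_)
      exact aux_int_s13 w ha m 0 (by simp)
    calc w (u - z) * w (u + z) ≤ (w x) ^ 2 * 1 := mul_le_mul' h1 h2
      _ = (w x) ^ 2 := mul_one _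

/-- telescoping -/
lemma aux_tel (ha : w a ≤ 1) (n : ℕ) :
    ∀ q j : ℕ, 1 ≤ j →
      w ((fun y => y ^ 2 + a)^[q * n + j] 0 - (fun y => y ^ 2 + a)^[j] 0)
        ≤ (w ((fun y => y ^ 2 + a)^[n] 0)) ^ 2 := by
  set F : K → K := fun y => y ^ 2 + a with hF
  intro q
  induction q with
  | zero => intro j hj; simp
  | succ q ih =>
    intro j hj
    have hstep : (q + 1) * n + j = (q * n + j) + n := by ring
    have h1 : F^[(q * n + j) + n] 0 = F^[q * n + j] (F^[n] 0) :=
      Function.iterate_add_apply F _ n 0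
    have hkey : w (F^[(q * n + j) + n] 0 - F^[q * n + j] 0) ≤ (w (F^[n] 0)) ^ 2 := by
      rw [h1]
      exact aux_key w ha (q * n + j) (le_trans hj (Nat.le_add_left _ _)) (F^[n] 0)
        (aux_int_s13 w ha n 0 (by simp))
    have hsplit : F^[(q+1) * n + j] 0 - F^[j] 0
        = (F^[(q * n + j) + n] 0 - F^[q * n + j] 0) + (F^[q * n + j] 0 - F^[j] 0) := by
      rw [hstep]; ring
    rw [hsplit]
    exact le_trans (w.map_add _ _) (max_le hkey (ih j hj))

/-- the main valuation computation -/
lemma aux_main (ha : w a ≤ 1) (n : ℕ) (hn1 : 1 ≤ n)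
    (hbn0 : w ((fun y => y ^ 2 + a)^[n] 0) ≠ 0)
    (hbn : w ((fun y => y ^ 2 + a)^[n] 0) < 1)
    (hr : ∀ r : ℕ, 1 ≤ r → r < n → w ((fun y => y ^ 2 + a)^[r] 0) = 1) :
    ∀ m : ℕ, 1 ≤ m →
      (n ∣ m → w ((fun y => y ^ 2 + a)^[m] 0) = w ((fun y => y ^ 2 + a)^[n] 0)) ∧
      (¬ n ∣ m → w ((fun y => y ^ 2 + a)^[m] 0) = 1) := by
  set F : K → K := fun y => y ^ 2 + a with hF
  set e := w (F^[n] 0) with he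
  have he2_lt_e : e ^ 2 < e := by
    have hle : e ^ 2 ≤ e := by
      calc e ^ 2 = e * e := sq e
        _ ≤ e * 1 := mul_le_mul' le_rfl hbn.le
        _ = e := mul_one e
    refine lt_of_le_of_ne hle ?_
    intro h
    have : e * e = e * 1 := by rw [← sq, h, mul_one]
    exact absurd (mul_left_cancel₀ hbn0 this) (by simpa using hbn.ne)
  have he2_lt_one : e ^ 2 < 1 := lt_trans he2_lt_e hbn
  intro m hm
  constructor
  · rintro ⟨q, rfl⟩
    have hq : 1 ≤ q := by
      rcases Nat.eq_zero_or_pos q with h | h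
      · simp [h] at hm
      · exact h
    have : n * q = (q - 1) * n + n := by
      have h2 : q = (q - 1) + 1 := by omega
      calc n * q = n * ((q-1)+1) := by rw [← h2]
        _ = (q - 1) * n + n := by ring
    rw [this]
    have htel := aux_tel w ha n (q - 1) n hn1
    have hlt : w (F^[(q-1) * n + n] 0 - F^[n] 0) < e := lt_of_le_of_lt htel he2_lt_e
    calc w (F^[(q-1) * n + n] 0)
        = w ((F^[(q-1) * n + n] 0 - F^[n] 0) + F^[n] 0) := by rw [sub_add_cancel]
      _ = e := w.map_add_eq_of_lt_right hlt
  · intro hnd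
    have hr1 : 1 ≤ m % n := by
      rcases Nat.eq_zero_or_pos (m % n) with h | h
      · exact absurd (Nat.dvd_of_mod_eq_zero h) hnd
      · exact h
    have hrn : m % n < n := Nat.mod_lt _ (by omega)
    have hdecomp : m = (m / n) * n + m % n := by
      rw [Nat.mul_comm]; exact (Nat.div_add_mod m n).symm
    have htel := aux_tel w ha n (m / n) (m % n) hr1
    have hbr : w (F^[m % n] 0) = 1 := hr _ hr1 hrn
    have hlt : w (F^[(m / n) * n + m % n] 0 - F^[m % n] 0) < w (F^[m % n] 0) := by
      rw [hbr]; exact lt_of_le_of_lt htel he2_lt_one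
    calc w (F^[m] 0) = w ((F^[(m/n) * n + m % n] 0 - F^[m % n] 0) + F^[m % n] 0) := by
          rw [sub_add_cancel, ← hdecomp]
      _ = w (F^[m % n] 0) := w.map_add_eq_of_lt_right hlt
      _ = 1 := hbr

end aux

/-- Let `f = X² + a` over a number field `K`, with adjusted post-critical
orbit `c₁ = -a`, `cₙ = fⁿ(0)` (`n ≥ 2`), all nonzero; let `v` be a finite place of `K` with
`v(c₁) ≥ 0`, and let `n` be the minimal index with `v(cₙ) > 0`.  Then for every `m ≥ 1`,
`v(c_m) = v(cₙ)` if `n ∣ m`, and `v(c_m) = 0` otherwise. -/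
theorem stmt_13 (K : Type*) [Field K] [NumberField K] (a : K)
    (f : K[X]) (hf : f = X ^ 2 + C a)
    (c : ℕ → K) (hc : ∀ n : ℕ, c n = if n = 1 then -a else (fun x => f.eval x)^[n] 0)
    (hne : ∀ n : ℕ, 1 ≤ n → c n ≠ 0)
    (v : HeightOneSpectrum (NumberField.RingOfIntegers K))
    (hv1 : 0 ≤ addVal K v (c 1))
    (n : ℕ) (hn1 : 1 ≤ n) (hn : 0 < addVal K v (c n))
    (hmin : ∀ i : ℕ, 1 ≤ i → 0 < addVal K v (c i) → n ≤ i) :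
    ∀ m : ℕ, 1 ≤ m →
      (n ∣ m → addVal K v (c m) = addVal K v (c n)) ∧
      (¬ n ∣ m → addVal K v (c m) = 0) := by
  set w : Valuation K (WithZero (Multiplicative ℤ)) := v.valuation K with hw
  have hFf : (fun x => f.eval x) = (fun y : K => y ^ 2 + a) := by
    funext x; simp [hf]
  set F : K → K := fun y => y ^ 2 + a with hF
  -- relate `c` and the iterates
  have hc' : ∀ k : ℕ, 2 ≤ k → c k = F^[k] 0 := by
    intro k hk
    rw [hc k, if_neg (by omega), hFf]
  have hb1 : F^[1] 0 = a := by simp [hF]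
  have hc1 : c 1 = -a := by rw [hc 1, if_pos rfl]
  have ha0 : a ≠ 0 := by
    intro h; exact hne 1 le_rfl (by rw [hc1, h, neg_zero])
  -- valuations of `c` and of the iterates agree
  have hwcb : ∀ k : ℕ, 1 ≤ k → w (c k) = w (F^[k] 0) := by
    intro k hk
    rcases eq_or_lt_of_le hk with h | h
    · rw [← h, hc1, hb1, Valuation.map_neg]
    · rw [hc' k h]
  have hbne : ∀ k : ℕ, 1 ≤ k → F^[k] 0 ≠ 0 := by
    intro k hk
    rcases eq_or_lt_of_le hk with h | h
    · rw [← h, hb1]; exact ha0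
    · rw [← hc' k h]; exact hne k hk
  -- `a` is integral at `v`
  have hwa : w a ≤ 1 := by
    have h1 : w (c 1) ≤ 1 := (addVal_le_one_iff v (hne 1 le_rfl)).mpr hv1
    rwa [hc1, Valuation.map_neg] at h1
  -- hypotheses of `aux_main`
  have hbn0 : w (F^[n] 0) ≠ 0 := by
    simpa [Valuation.zero_iff] using hbne n hn1
  have hbn : w (F^[n] 0) < 1 := by
    rw [← hwcb n hn1]
    exact (addVal_lt_one_iff v (hne n hn1)).mpr hn
  have hr : ∀ r : ℕ, 1 ≤ r → r < n → w (F^[r] 0) = 1 := by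
    intro r hr1 hrn
    have hint : w (F^[r] 0) ≤ 1 := aux_int_s13 w hwa r 0 (by simp)
    have hcle : w (c r) ≤ 1 := by rw [hwcb r hr1]; exact hint
    have h1 : 0 ≤ addVal K v (c r) := (addVal_le_one_iff v (hne r hr1)).mp hcle
    have h2 : ¬ (0 < addVal K v (c r)) := fun h => absurd (hmin r hr1 h) (by omega)
    have h3 : addVal K v (c r) = 0 := by omega
    rw [← hwcb r hr1]
    exact (addVal_eq_zero_iff v (hne r hr1)).mpr h3
  have main := aux_main w hwa n hn1 hbn0 hbn hr
  intro m hm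
  obtain ⟨hdvd, hndvd⟩ := main m hm
  constructor
  · intro h
    refine (addVal_eq_iff v (hne m hm) (hne n hn1)).mp ?_
    rw [hwcb m hm, hwcb n hn1]
    exact hdvd h
  · intro h
    refine (addVal_eq_zero_iff v (hne m hm)).mp ?_
    rw [hwcb m hm]
    exact hndvd h
end

section
/- Every commutative subgroup of Ω_∞, the automorphism group of the infinite rooted regular binary tree, has infinite index in Ω_∞. -/
/-- The automorphism group `Ω_∞` of the infinite rooted regular binary tree: vertices are
finite binary strings (lists of booleans), and automorphisms are the permutations of the
vertex set preserving lengths and the prefix relation. -/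
def OmegaInf : Subgroup (Equiv.Perm (List Bool)) where
  carrier := {σ | (∀ l : List Bool, (σ l).length = l.length) ∧
    ∀ l m : List Bool, l <+: m ↔ σ l <+: σ m}
  one_mem' := ⟨fun _ => rfl, fun _ _ => Iff.rfl⟩
  mul_mem' := by
    rintro σ τ ⟨hσ1, hσ2⟩ ⟨hτ1, hτ2⟩
    refine ⟨fun l => ?_, fun l m => ?_⟩
    · simp only [Equiv.Perm.mul_apply, hσ1, hτ1]
    · simp only [Equiv.Perm.mul_apply]
      exact (hτ2 l m).trans (hσ2 _ _)
  inv_mem' := by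
    rintro σ ⟨h1, h2⟩
    refine ⟨fun l => ?_, fun l m => ?_⟩
    · conv_rhs => rw [← (show σ (σ⁻¹ l) = l from σ.apply_symm_apply l)]
      rw [h1]
    · have h := h2 (σ⁻¹ l) (σ⁻¹ m)
      rw [(show ∀ x, σ (σ⁻¹ x) = x from σ.apply_symm_apply), (show ∀ x, σ (σ⁻¹ x) = x from σ.apply_symm_apply)] at h
      exact h.symm

namespace Stmt16Aux

/-- Flip bit `n` of `l` if bit `n-1` is `true` (unconditionally when `n = 0`). -/
def F (n : ℕ) (l : List Bool) : List Bool :=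
  if n = 0 ∨ l.getD (n-1) false = true then l.set n (!(l.getD n false)) else l

lemma F_eq_of_le {n : ℕ} {l : List Bool} (h : l.length ≤ n) : F n l = l := by
  unfold F; split
  · exact List.set_eq_of_length_le h
  · rfl

lemma length_F (n : ℕ) (l : List Bool) : (F n l).length = l.length := by
  unfold F; split <;> simp

lemma getD_eq_getElem {l : List Bool} {n : ℕ} (h : n < l.length) :
    l.getD n false = l[n] := by
  rw [List.getD_eq_getElem?_getD, List.getElem?_eq_getElem h]; rfl

lemma F_invol (n : ℕ) : Function.Involutive (F n) := by
  intro l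
  by_cases hn : n < l.length
  · by_cases hc : n = 0 ∨ l.getD (n-1) false = true
    · have hv : l.getD n false = l[n] := getD_eq_getElem hn
      have hset : F n l = l.set n (!l[n]) := by rw [F, if_pos hc, hv]
      have hlen : n < (F n l).length := by rw [length_F]; exact hn
      have hc2 : n = 0 ∨ (F n l).getD (n-1) false = true := by
        by_cases h0 : n = 0
        · exact Or.inl h0
        · right
          have hne : n ≠ n - 1 := by omega
          rw [hset, List.getD_eq_getElem?_getD, List.getElem?_set_ne hne,
            ← List.getD_eq_getElem?_getD]
          exact hc.resolve_left h0
      have hv2 : (F n l).getD n false = !l[n] := by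
        rw [List.getD_eq_getElem?_getD, hset, List.getElem?_set_self (by simpa using hn)]
        rfl
      rw [F, if_pos hc2, hv2, hset, List.set_set, Bool.not_not]
      apply List.ext_getElem (by simp)
      intro i h1 h2
      rw [List.getElem_set]
      split <;> simp_all
    · have h1 : F n l = l := by rw [F, if_neg hc]
      rw [h1, h1]
  · have e : F n l = l := F_eq_of_le (by omega)
    rw [e, e]

lemma F_prefix (n : ℕ) {l m : List Bool} (h : l <+: m) : F n l <+: F n m := by
  obtain ⟨t, rfl⟩ := h
  by_cases hn : n < l.length
  · have h1 : (l ++ t).getD (n-1) false = l.getD (n-1) false := by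
      rw [List.getD_eq_getElem?_getD, List.getElem?_append_left (by omega),
        ← List.getD_eq_getElem?_getD]
    have h2 : (l ++ t).getD n false = l.getD n false := by
      rw [List.getD_eq_getElem?_getD, List.getElem?_append_left hn,
        ← List.getD_eq_getElem?_getD]
    unfold F
    rw [h1, h2]
    split
    · rw [List.set_append, if_pos hn]
      exact List.prefix_append _ _
    · exact List.prefix_append _ _
  · rw [F_eq_of_le (by omega)]
    unfold F
    split
    · rw [List.set_append, if_neg hn]
      exact List.prefix_append _ _
    · exact List.prefix_append _ _

/-- `X n` as a permutation. -/
def Xp (n : ℕ) : Equiv.Perm (List Bool) := Function.Involutive.toPerm (F n) (F_invol n)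

lemma Xp_apply (n : ℕ) (l : List Bool) : Xp n l = F n l := rfl

lemma Xp_mem (n : ℕ) : Xp n ∈ OmegaInf := by
  refine ⟨fun l => length_F n l, fun l m => ⟨F_prefix n, fun h => ?_⟩⟩
  have := F_prefix n h
  rwa [Xp_apply, Xp_apply, F_invol n l, F_invol n m] at this

def X (n : ℕ) : OmegaInf := ⟨Xp n, Xp_mem n⟩

/-- Partial products. -/
def g : ℕ → OmegaInf
  | 0 => 1
  | n+1 => g n * X n

def D (i j : ℕ) : OmegaInf := (g i)⁻¹ * g j

lemma D_self (i : ℕ) : D i i = 1 := by simp [D]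

lemma D_succ (i j : ℕ) : D i (j+1) = D i j * X j := by
  simp [D, g, mul_assoc]

/-- The function-level analogue of `F`. -/
def step (n : ℕ) (f : ℕ → Bool) : ℕ → Bool :=
  if n = 0 ∨ f (n-1) = true then Function.update f n (!f n) else f

/-- The function-level analogue of `D i (i+d)`. -/
def A (i : ℕ) : ℕ → (ℕ → Bool) → (ℕ → Bool)
  | 0, f => f
  | d+1, f => A i d (step (i+d) f)

lemma getD_map_range (f : ℕ → Bool) {k n : ℕ} (h : n < k) :
    ((List.range k).map f).getD n false = f n := by
  rw [List.getD_eq_getElem?_getD, List.getElem?_map, List.getElem?_range h]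
  rfl

lemma F_map_range (f : ℕ → Bool) {k n : ℕ} (h : n < k) :
    F n ((List.range k).map f) = (List.range k).map (step n f) := by
  have h1 : n - 1 < k := by omega
  unfold F step
  rw [getD_map_range f h1, getD_map_range f h]
  split
  · apply List.ext_getElem (by simp)
    intro i hi1 hi2
    simp only [List.getElem_set, List.getElem_map, List.getElem_range,
      Function.update_apply]
    by_cases hin : i = n
    · subst hin; simp
    · rw [if_neg (fun hh => hin hh.symm), if_neg hin]
  · rfl

lemma D_map (i d k : ℕ) (f : ℕ → Bool) (h : i + d ≤ k) :
    ((D i (i+d) : OmegaInf) : Equiv.Perm (List Bool)) ((List.range k).map f)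
      = (List.range k).map (A i d f) := by
  induction d generalizing f with
  | zero => simp [D_self, A]
  | succ d ih =>
    have hD : D i (i+(d+1)) = D i (i+d) * X (i+d) := D_succ i (i+d)
    rw [hD]
    have : ((D i (i+d) * X (i+d) : OmegaInf) : Equiv.Perm (List Bool))
        ((List.range k).map f)
        = ((D i (i+d) : OmegaInf) : Equiv.Perm (List Bool))
          (((X (i+d) : OmegaInf) : Equiv.Perm (List Bool)) ((List.range k).map f)) := rfl
    rw [this]
    have hX : ((X (i+d) : OmegaInf) : Equiv.Perm (List Bool)) ((List.range k).map f)
        = (List.range k).map (step (i+d) f) := F_map_range f (by omega)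
    rw [hX, ih (step (i+d) f) (by omega)]
    rfl

lemma A_true (i d : ℕ) (f : ℕ → Bool) (hf : ∀ b, b < i + d → f b = true) :
    A i d f = fun b => if i ≤ b ∧ b < i + d then false else f b := by
  induction d generalizing f with
  | zero =>
    funext b
    rw [A, if_neg (by omega)]
  | succ d ih =>
    have hc : i + d = 0 ∨ f (i+d-1) = true := by
      by_cases h0 : i + d = 0
      · exact Or.inl h0
      · exact Or.inr (hf _ (by omega))
    have hstep : step (i+d) f = Function.update f (i+d) false := by
      rw [step, if_pos hc, hf (i+d) (by omega)]
      rfl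
    have hf' : ∀ b, b < i + d → Function.update f (i+d) false b = true := by
      intro b hb
      rw [Function.update_apply, if_neg (by omega)]
      exact hf b (by omega)
    funext b
    rw [A, hstep, ih _ hf']
    simp only [Function.update_apply]
    split_ifs <;> first | rfl | omega

lemma A_blocked (j d : ℕ) (f : ℕ → Bool) (hj : 1 ≤ j) (h0 : f (j-1) = false)
    (hf : ∀ b, j ≤ b → b < j + d → f b = true) :
    A j d f = fun b => if j+1 ≤ b ∧ b < j + d then false else f b := by
  induction d generalizing f with
  | zero =>
    funext b
    rw [A, if_neg (by omega)]
  | succ d ih =>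
    rcases Nat.eq_zero_or_pos d with hd | hd
    · subst hd
      have hstep : step j f = f := by
        rw [step, if_neg]
        push_neg
        exact ⟨by omega, by simp [h0]⟩
      funext b
      rw [A, A, show j + 0 = j from rfl, hstep, if_neg (by omega)]
    · have hstep : step (j+d) f = Function.update f (j+d) false := by
        rw [step, if_pos (Or.inr (hf _ (by omega) (by omega))), hf (j+d) (by omega) (by omega)]
        rfl
      have h0' : Function.update f (j+d) false (j-1) = false := by
        rw [Function.update_apply, if_neg (by omega)]
        exact h0
      have hf' : ∀ b, j ≤ b → b < j + d → Function.update f (j+d) false b = true := by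
        intro b hb1 hb2
        rw [Function.update_apply, if_neg (by omega)]
        exact hf b hb1 (by omega)
      funext b
      rw [A, hstep, ih _ h0' hf']
      simp only [Function.update_apply]
      split_ifs <;> first | rfl | omega

end Stmt16Aux

open Stmt16Aux in
/-- Every commutative subgroup of `Ω_∞` has infinite index in `Ω_∞`. -/
theorem stmt_16 (H : Subgroup OmegaInf)
    (hH : ∀ x ∈ H, ∀ y ∈ H, x * y = y * x) :
    Infinite (OmegaInf ⧸ H) := by
  by_contra hinf
  rw [not_infinite_iff_finite] at hinf
  obtain ⟨y, hy⟩ :=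
    Finite.exists_infinite_fiber (fun n : ℕ => ((g n : OmegaInf) : OmegaInf ⧸ H))
  rw [Set.infinite_coe_iff] at hy
  obtain ⟨i, hi⟩ := hy.nonempty
  obtain ⟨j, hj, hij⟩ := hy.exists_gt i
  obtain ⟨k, hk, hjk⟩ := hy.exists_gt j
  have hi' : ((g i : OmegaInf) : OmegaInf ⧸ H) = y := hi
  have hj' : ((g j : OmegaInf) : OmegaInf ⧸ H) = y := hj
  have hk' : ((g k : OmegaInf) : OmegaInf ⧸ H) = y := hk
  have h1 : D i j ∈ H := QuotientGroup.eq.mp (hi'.trans hj'.symm)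
  have h2 : D j k ∈ H := QuotientGroup.eq.mp (hj'.trans hk'.symm)
  have hcomm : D i j * D j k = D j k * D i j := hH _ h1 _ h2
  -- evaluate on the all-true list of length k
  set f0 : ℕ → Bool := fun _ => true with hf0
  have ej : i + (j - i) = j := by omega
  have ek : j + (k - j) = k := by omega
  -- first composite
  have q1 : A j (k-j) f0 = fun b => if j ≤ b ∧ b < k then false else true := by
    have := A_true j (k-j) f0 (fun b _ => rfl)
    rwa [ek] at this
  have q1true : ∀ b, b < i + (j - i) → A j (k-j) f0 b = true := by
    intro b hb
    simp only [q1]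
    rw [if_neg (by omega)]
  have q2 : A i (j-i) (A j (k-j) f0)
      = fun b => if i ≤ b ∧ b < i + (j-i) then false else A j (k-j) f0 b :=
    A_true i (j-i) _ q1true
  -- second composite
  have p1 : A i (j-i) f0 = fun b => if i ≤ b ∧ b < j then false else true := by
    have := A_true i (j-i) f0 (fun b _ => rfl)
    rwa [ej] at this
  have p2 : A j (k-j) (A i (j-i) f0)
      = fun b => if j+1 ≤ b ∧ b < j + (k-j) then false else A i (j-i) f0 b := by
    refine A_blocked j (k-j) _ (by omega) ?_ ?_
    · simp only [p1]
      rw [if_pos (⟨by omega, by omega⟩ : i ≤ j - 1 ∧ j - 1 < j)]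
    · intro b hb1 hb2
      simp only [p1]
      rw [if_neg (by omega)]
  -- list-level evaluation
  have e1 : ((D i j * D j k : OmegaInf) : Equiv.Perm (List Bool)) ((List.range k).map f0)
      = (List.range k).map (A i (j-i) (A j (k-j) f0)) := by
    have hmul : ((D i j * D j k : OmegaInf) : Equiv.Perm (List Bool)) ((List.range k).map f0)
        = ((D i j : OmegaInf) : Equiv.Perm (List Bool))
          (((D j k : OmegaInf) : Equiv.Perm (List Bool)) ((List.range k).map f0)) := rfl
    rw [hmul, show D j k = D j (j + (k-j)) by rw [ek], D_map j (k-j) k f0 (by omega),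
      show D i j = D i (i + (j-i)) by rw [ej], D_map i (j-i) k _ (by omega)]
  have e2 : ((D j k * D i j : OmegaInf) : Equiv.Perm (List Bool)) ((List.range k).map f0)
      = (List.range k).map (A j (k-j) (A i (j-i) f0)) := by
    have hmul : ((D j k * D i j : OmegaInf) : Equiv.Perm (List Bool)) ((List.range k).map f0)
        = ((D j k : OmegaInf) : Equiv.Perm (List Bool))
          (((D i j : OmegaInf) : Equiv.Perm (List Bool)) ((List.range k).map f0)) := rfl
    rw [hmul, show D i j = D i (i + (j-i)) by rw [ej], D_map i (j-i) k f0 (by omega),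
      show D j k = D j (j + (k-j)) by rw [ek], D_map j (k-j) k _ (by omega)]
  have heq : (List.range k).map (A i (j-i) (A j (k-j) f0))
      = (List.range k).map (A j (k-j) (A i (j-i) f0)) := by
    rw [← e1, ← e2, hcomm]
  have hlen : j < ((List.range k).map (A i (j-i) (A j (k-j) f0))).length := by
    simpa using hjk
  have hval := congrArg (fun l => l[j]?) heq
  simp only [List.getElem?_map, List.getElem?_range hjk, Option.map_some] at hval
  have hL : A i (j-i) (A j (k-j) f0) j = false := by
    simp only [q2]
    rw [if_neg (by omega)]
    simp only [q1]
    rw [if_pos (⟨le_refl j, hjk⟩ : j ≤ j ∧ j < k)]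
  have hR : A j (k-j) (A i (j-i) f0) j = true := by
    simp only [p2]
    rw [if_neg (by omega)]
    simp only [p1]
    rw [if_neg (by omega)]
  rw [hL, hR] at hval
  exact Bool.noConfusion (Option.some.inj hval)
end
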